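/- arXiv:2110.00164 — 4 statements merged into one kernel-verified Lean document; each statement's English description precedes it below -/
import Mathlib

section
/- Let T be a semistandard Young tableau of partition shape. For every j ≥ 1, the set of entries of column j of the right key K_+(T) equals ∅ ⋆ word(T_{≥j}), where T_{≥j} is T with its first j−1 columns removed. -/
/-- `S ⋆ m`: replace the largest element of `S` that is `≤ m` by `m`,
or insert `m` if no such element exists. -/
def starOne (S : Finset ℕ) (m : ℕ) : Finset ℕ :=
  if h : (S.filter (fun x => x ≤ m)).Nonempty then
    insert m (S.erase ((S.filter (fun x => x ≤ m)).max' h))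
  else insert m S

/-- `S ⋆ w` for a word `w`. -/
def starWord (S : Finset ℕ) (w : List ℕ) : Finset ℕ := w.foldl starOne S

/-- A semistandard Young tableau filling, encoded by its list of columns
(left to right), each column listed top to bottom: columns strictly
increase downwards, column lengths weakly decrease (partition shape), and
rows weakly increase to the right. -/
def IsSSYTFill (P : List (List ℕ)) : Prop :=
  (∀ c ∈ P, List.Chain' (· < ·) c) ∧
  List.Chain' (fun c d => d.length ≤ c.length ∧
    ∀ r, r < d.length → c.getD r 0 ≤ d.getD r 0) P

/-- The column word of an SSYT filling: columns left to right, each read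
bottom to top. -/
def fillWord (P : List (List ℕ)) : List ℕ := (P.map List.reverse).flatten

/-- `P` is obtained from the set-valued filling `T` by choosing one element
in each cell. -/
def IsChoice (P : List (List ℕ)) (T : List (List (Finset ℕ))) : Prop :=
  List.Forall₂ (List.Forall₂ (· ∈ ·)) P T

/-- A set-valued tableau: all cells are nonempty finite sets, and every
choice of one element per cell yields an SSYT. -/
def IsSVT (T : List (List (Finset ℕ))) : Prop :=
  (∀ c ∈ T, ∀ S ∈ c, S.Nonempty) ∧
  ∀ P, IsChoice P T → IsSSYTFill P

/-- The word of a cell: its elements listed increasingly. -/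
def cellWord (S : Finset ℕ) : List ℕ := S.sort (· ≤ ·)

/-- The column word of a set-valued tableau. -/
def svtWord (T : List (List (Finset ℕ))) : List ℕ :=
  (T.map (fun c => (c.reverse.map cellWord).flatten)).flatten

/-- Column `j` (0-indexed) of the right key `K₊(T)` of a set-valued tableau,
computed as `∅ ⋆ word(T_{≥ j})`. -/
def svtKeyCol (T : List (List (Finset ℕ))) (j : ℕ) : Finset ℕ :=
  starWord ∅ (svtWord (T.drop j))

/-- Column `j` (0-indexed) of the key `key(α)` of a weak composition `α`:
the set of rows `r` with `α r > j`. -/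
def keyCol (α : ℕ →₀ ℕ) (j : ℕ) : Finset ℕ :=
  α.support.filter (fun r => j < α r)

/-- The `k`-th smallest element of a finite set (0 for out of range `k`). -/
def ithSmall (A : Finset ℕ) (k : ℕ) : ℕ := (A.sort (· ≤ ·)).getD k 0

/-- Entrywise comparison of two columns (as sets of equal size). -/
def colLE (A B : Finset ℕ) : Prop :=
  A.card = B.card ∧ ∀ k, ithSmall A k ≤ ithSmall B k

/-- `T ∈ SVT(α)`: `T` is a set-valued tableau of the same shape as `key(α)`
with `K₊(T) ≤ key(α)` entrywise. -/
def InSVTset (α : ℕ →₀ ℕ) (T : List (List (Finset ℕ))) : Prop :=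
  IsSVT T ∧ (∀ j, (T.getD j []).length = (keyCol α j).card) ∧
  ∀ j, colLE (svtKeyCol T j) (keyCol α j)

/-- The weight of a set-valued tableau: the number of occurrences of each letter. -/
noncomputable def svtWt (T : List (List (Finset ℕ))) : ℕ →₀ ℕ :=
  ((svtWord T).map (fun i => Finsupp.single i 1)).sum

/-- The number of cells of a tableau. -/
def numCells (T : List (List (Finset ℕ))) : ℕ := (T.map List.length).sum

/-- The excess `ex(T) = |wt(T)| - #cells`. -/
def svtEx (T : List (List (Finset ℕ))) : ℕ := (svtWord T).length - numCells T

/-- `s_i α`: swap the `i`-th and `(i+1)`-th entries of a weak composition. -/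
def swapComp (i : ℕ) (α : ℕ →₀ ℕ) : ℕ →₀ ℕ :=
  Finsupp.equivMapDomain (Equiv.swap i (i+1)) α

/-- Knuth equivalence of words. -/
inductive Knuth : List ℕ → List ℕ → Prop
  | swap_xzy (u v : List ℕ) (x y z : ℕ) (h1 : x ≤ y) (h2 : y < z) :
      Knuth (u ++ [x, z, y] ++ v) (u ++ [z, x, y] ++ v)
  | swap_yxz (u v : List ℕ) (x y z : ℕ) (h1 : x < y) (h2 : y ≤ z) :
      Knuth (u ++ [y, x, z] ++ v) (u ++ [y, z, x] ++ v)
  | refl (u : List ℕ) : Knuth u u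
  | symm {u v : List ℕ} : Knuth u v → Knuth v u
  | trans {u v w : List ℕ} : Knuth u v → Knuth v w → Knuth u w

/-- A semistandard tableau of antinormal shape (a 180° rotation of a
partition shape), encoded by its columns left to right, each listed top to
bottom; the columns are bottom-aligned and their lengths weakly increase.
Columns strictly increase downwards and rows weakly increase rightwards. -/
def IsAntiFill (A : List (List ℕ)) : Prop :=
  (∀ c ∈ A, c ≠ []) ∧
  (∀ c ∈ A, List.Chain' (· < ·) c) ∧
  List.Chain' (fun c d => c.length ≤ d.length ∧
    ∀ r, r < c.length → c.getD r 0 ≤ d.getD (r + (d.length - c.length)) 0) A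


section StarAux

open Finset List

lemma starOne_of_not (S : Finset ℕ) (m : ℕ) (h : ∀ a ∈ S, ¬ a ≤ m) :
    starOne S m = insert m S := by
  rw [starOne, dif_neg]
  rintro ⟨a, ha⟩
  simp only [Finset.mem_filter] at ha
  exact h a ha.1 ha.2

lemma starOne_of_max (S : Finset ℕ) (m b : ℕ) (hb : b ∈ S) (hbm : b ≤ m)
    (hmax : ∀ a ∈ S, a ≤ m → a ≤ b) : starOne S m = insert m (S.erase b) := by
  have hne : (S.filter (fun x => x ≤ m)).Nonempty := ⟨b, by simp [hb, hbm]⟩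
  rw [starOne, dif_pos hne]
  congr 2
  have h1 : (S.filter (fun x => x ≤ m)).max' hne ∈ S.filter (fun x => x ≤ m) :=
    Finset.max'_mem _ _
  simp only [Finset.mem_filter] at h1
  have h2 : b ≤ (S.filter (fun x => x ≤ m)).max' hne :=
    Finset.le_max' _ _ (by simp [hb, hbm])
  exact le_antisymm (hmax _ h1.1 h1.2) h2

lemma starOne_subset (S : Finset ℕ) (m : ℕ) : starOne S m ⊆ insert m S := by
  rw [starOne]
  split
  · exact insert_subset_insert _ (Finset.erase_subset _ _)
  · exact subset_rfl

lemma star_comm (W : Finset ℕ) (x z : ℕ) (hxz : x < z)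
    (hg : ∃ g ∈ W, x < g ∧ g ≤ z) :
    starOne (starOne W x) z = starOne (starOne W z) x := by
  obtain ⟨g, hgW, hgx, hgz⟩ := hg
  have hcne : (W.filter (fun t => t ≤ z)).Nonempty := ⟨g, by simp [hgW, hgz]⟩
  set c := (W.filter (fun t => t ≤ z)).max' hcne with hc
  have hcmem : c ∈ W.filter (fun t => t ≤ z) := Finset.max'_mem _ _
  have hcW : c ∈ W := (Finset.mem_filter.mp hcmem).1
  have hcz : c ≤ z := (Finset.mem_filter.mp hcmem).2
  have hcmax : ∀ a ∈ W, a ≤ z → a ≤ c := fun a ha haz =>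
    Finset.le_max' _ _ (by simp [ha, haz])
  have hxc : x < c := lt_of_lt_of_le hgx (hcmax g hgW hgz)
  have hWz : starOne W z = insert z (W.erase c) := starOne_of_max W z c hcW hcz hcmax
  by_cases hA : (W.filter (fun t => t ≤ x)).Nonempty
  · set a := (W.filter (fun t => t ≤ x)).max' hA with ha
    have hamem : a ∈ W.filter (fun t => t ≤ x) := Finset.max'_mem _ _
    have haW : a ∈ W := (Finset.mem_filter.mp hamem).1
    have hax : a ≤ x := (Finset.mem_filter.mp hamem).2
    have hamax : ∀ t ∈ W, t ≤ x → t ≤ a := fun t ht htx =>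
      Finset.le_max' _ _ (by simp [ht, htx])
    have hWx : starOne W x = insert x (W.erase a) := starOne_of_max W x a haW hax hamax
    have hac : a ≠ c := by omega
    -- LHS second step: witness c in insert x (W.erase a)
    have L2 : starOne (insert x (W.erase a)) z
        = insert z ((insert x (W.erase a)).erase c) := by
      apply starOne_of_max
      · exact Finset.mem_insert_of_mem (Finset.mem_erase.mpr ⟨hac.symm, hcW⟩)
      · exact hcz
      · intro t ht htz
        rcases Finset.mem_insert.mp ht with h | h
        · omega
        · exact hcmax t (Finset.mem_of_mem_erase h) htz
    -- RHS second step: witness a in insert z (W.erase c)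
    have R2 : starOne (insert z (W.erase c)) x
        = insert x ((insert z (W.erase c)).erase a) := by
      apply starOne_of_max
      · exact Finset.mem_insert_of_mem (Finset.mem_erase.mpr ⟨hac, haW⟩)
      · exact hax
      · intro t ht htx
        rcases Finset.mem_insert.mp ht with h | h
        · omega
        · exact hamax t (Finset.mem_of_mem_erase h) htx
    rw [hWx, hWz, L2, R2]
    ext t
    simp only [Finset.mem_insert, Finset.mem_erase]
    by_cases htW : t ∈ W <;> simp [htW] <;> omega
  · -- no element ≤ x in W
    have hnot : ∀ t ∈ W, ¬ t ≤ x := by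
      intro t ht htx
      exact hA ⟨t, by simp [ht, htx]⟩
    have hWx : starOne W x = insert x W := starOne_of_not W x hnot
    have L2 : starOne (insert x W) z = insert z ((insert x W).erase c) := by
      apply starOne_of_max
      · exact Finset.mem_insert_of_mem hcW
      · exact hcz
      · intro t ht htz
        rcases Finset.mem_insert.mp ht with h | h
        · omega
        · exact hcmax t h htz
    have R2 : starOne (insert z (W.erase c)) x = insert x (insert z (W.erase c)) := by
      apply starOne_of_not
      intro t ht htx
      rcases Finset.mem_insert.mp ht with h | h
      · omega
      · exact hnot t (Finset.mem_of_mem_erase h) htx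
    rw [hWx, hWz, L2, R2]
    ext t
    simp only [Finset.mem_insert, Finset.mem_erase]
    by_cases htW : t ∈ W <;> simp [htW] <;> omega

lemma star_absorb (W : Finset ℕ) (x y : ℕ) (hxy : x ≤ y)
    (h : ∀ t ∈ W, t ≤ y → t ≤ x) :
    starOne (starOne W x) y = starOne W y := by
  by_cases hA : (W.filter (fun t => t ≤ x)).Nonempty
  · set e := (W.filter (fun t => t ≤ x)).max' hA with he
    have hemem : e ∈ W.filter (fun t => t ≤ x) := Finset.max'_mem _ _
    have heW : e ∈ W := (Finset.mem_filter.mp hemem).1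
    have hex : e ≤ x := (Finset.mem_filter.mp hemem).2
    have hemax : ∀ t ∈ W, t ≤ x → t ≤ e := fun t ht htx =>
      Finset.le_max' _ _ (by simp [ht, htx])
    have hWx : starOne W x = insert x (W.erase e) := starOne_of_max W x e heW hex hemax
    have hWy : starOne W y = insert y (W.erase e) :=
      starOne_of_max W y e heW (le_trans hex hxy)
        (fun t ht hty => hemax t ht (h t ht hty))
    have hxnW : x ∉ W.erase e := by
      intro hx
      have hxW := Finset.mem_of_mem_erase hx
      have := hemax x hxW le_rfl
      have : e = x := le_antisymm hex this
      exact (Finset.mem_erase.mp hx).1 (by omega)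
    have L2 : starOne (insert x (W.erase e)) y
        = insert y ((insert x (W.erase e)).erase x) := by
      apply starOne_of_max
      · exact Finset.mem_insert_self _ _
      · exact hxy
      · intro t ht hty
        rcases Finset.mem_insert.mp ht with h' | h'
        · omega
        · exact h t (Finset.mem_of_mem_erase h') hty
    rw [hWx, hWy, L2, Finset.erase_insert hxnW]
  · have hnot : ∀ t ∈ W, ¬ t ≤ x := by
      intro t ht htx
      exact hA ⟨t, by simp [ht, htx]⟩
    have hnoty : ∀ t ∈ W, ¬ t ≤ y := fun t ht hty => hnot t ht (h t ht hty)
    have hWx : starOne W x = insert x W := starOne_of_not W x hnot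
    have hWy : starOne W y = insert y W := starOne_of_not W y hnoty
    have hxnW : x ∉ W := fun hx => hnot x hx le_rfl
    have L2 : starOne (insert x W) y = insert y ((insert x W).erase x) := by
      apply starOne_of_max
      · exact Finset.mem_insert_self _ _
      · exact hxy
      · intro t ht hty
        rcases Finset.mem_insert.mp ht with h' | h'
        · omega
        · exact absurd hty (hnoty t h')
    rw [hWx, hWy, L2, Finset.erase_insert hxnW]

lemma claim1 (S : Finset ℕ) (x y z : ℕ) (h1 : x ≤ y) (h2 : y < z) :
    starOne (starOne (starOne S x) z) y = starOne (starOne (starOne S z) x) y := by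
  by_cases hg : ∃ g ∈ S, x < g ∧ g ≤ z
  · rw [star_comm S x z (by omega) hg]
  · push_neg at hg
    have hSx : ∀ t ∈ S, t ≤ z → t ≤ x := by
      intro t ht htz
      by_contra hc
      have := hg t ht (by omega)
      omega
    have e1 : starOne (starOne S x) z = starOne S z :=
      star_absorb S x z (by omega) hSx
    have e2 : starOne (starOne (starOne S z) x) y = starOne (starOne S z) y := by
      apply star_absorb
      · exact h1
      · intro t ht hty
        have := starOne_subset S z ht
        rcases Finset.mem_insert.mp this with h' | h'
        · omega
        · exact hSx t h' (by omega)
    rw [e1, e2]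

lemma claim2 (S : Finset ℕ) (x y z : ℕ) (h1 : x < y) (h2 : y ≤ z) :
    starOne (starOne (starOne S y) x) z = starOne (starOne (starOne S y) z) x := by
  apply star_comm
  · omega
  · refine ⟨y, ?_, h1, h2⟩
    rw [starOne]
    split <;> exact Finset.mem_insert_self _ _

lemma star_knuth {u v : List ℕ} (h : Knuth u v) :
    ∀ S : Finset ℕ, starWord S u = starWord S v := by
  induction h with
  | swap_xzy u v x y z h1 h2 =>
      intro S
      simp only [starWord, List.foldl_append, List.foldl_cons, List.foldl_nil]
      rw [claim1 _ x y z h1 h2]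
  | swap_yxz u v x y z h1 h2 =>
      intro S
      simp only [starWord, List.foldl_append, List.foldl_cons, List.foldl_nil]
      rw [claim2 _ x y z h1 h2]
  | refl u => intro S; rfl
  | symm _ ih => intro S; exact (ih S).symm
  | trans _ _ ih1 ih2 => intro S; exact (ih1 S).trans (ih2 S)

lemma starOne_insert_big {X : Finset ℕ} {m a : ℕ} (hm : ∀ t ∈ X, t < m) (ham : a < m) :
    starOne (insert m X) a = insert m (starOne X a) := by
  have hfilter : (insert m X).filter (fun t => t ≤ a) = X.filter (fun t => t ≤ a) := by
    ext t
    simp only [Finset.mem_filter, Finset.mem_insert]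
    constructor
    · rintro ⟨rfl | h, h2⟩
      · omega
      · exact ⟨h, h2⟩
    · rintro ⟨h, h2⟩
      exact ⟨Or.inr h, h2⟩
  by_cases hA : (X.filter (fun t => t ≤ a)).Nonempty
  · set b := (X.filter (fun t => t ≤ a)).max' hA with hb
    have hbmem := Finset.max'_mem (X.filter (fun t => t ≤ a)) hA
    have hbX : b ∈ X := (Finset.mem_filter.mp hbmem).1
    have hba : b ≤ a := (Finset.mem_filter.mp hbmem).2
    have hbmax : ∀ t ∈ X, t ≤ a → t ≤ b := fun t ht hta =>
      Finset.le_max' _ _ (by simp [ht, hta])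
    have h1 : starOne (insert m X) a = insert a ((insert m X).erase b) := by
      apply starOne_of_max
      · exact Finset.mem_insert_of_mem hbX
      · exact hba
      · intro t ht hta
        rcases Finset.mem_insert.mp ht with h' | h'
        · omega
        · exact hbmax t h' hta
    have h2 : starOne X a = insert a (X.erase b) := starOne_of_max X a b hbX hba hbmax
    have hbm : b ≠ m := by have := hm b hbX; omega
    rw [h1, h2, Finset.erase_insert_of_ne hbm.symm, Finset.insert_comm]
  · have h1 : starOne (insert m X) a = insert a (insert m X) := by
      apply starOne_of_not
      intro t ht hta
      rcases Finset.mem_insert.mp ht with h' | h'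
      · omega
      · exact hA ⟨t, by simp [h', hta]⟩
    have h2 : starOne X a = insert a X :=
      starOne_of_not X a (fun t ht hta => hA ⟨t, by simp [ht, hta]⟩)
    rw [h1, h2, Finset.insert_comm]

lemma starWord_insert_big {X : Finset ℕ} {m : ℕ} (w : List ℕ)
    (hm : ∀ t ∈ X, t < m) (hw : ∀ a ∈ w, a < m) :
    starWord (insert m X) w = insert m (starWord X w) := by
  induction w generalizing X with
  | nil => rfl
  | cons a w ih =>
      have ham : a < m := hw a (List.mem_cons_self)
      show starWord (starOne (insert m X) a) w = insert m (starWord (starOne X a) w)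
      rw [starOne_insert_big hm ham]
      apply ih
      · intro t ht
        rcases Finset.mem_insert.mp (starOne_subset X a ht) with h' | h'
        · omega
        · exact hm t h'
      · intro b hb
        exact hw b (List.mem_cons_of_mem a hb)

/-- The column condition of an antinormal fill. -/
def AntiRel (c d : List ℕ) : Prop :=
  c.length ≤ d.length ∧
    ∀ r, r < c.length → c.getD r 0 ≤ d.getD (r + (d.length - c.length)) 0

lemma colStep (d : List ℕ) : ∀ (c : List ℕ), List.Chain' (· < ·) c →
    List.Chain' (· < ·) d → AntiRel c d →
    starWord c.toFinset d.reverse = d.toFinset := by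
  induction d using List.reverseRecOn with
  | nil =>
      intro c _ _ hrel
      have : c = [] := List.eq_nil_of_length_eq_zero (by
        have := hrel.1; simpa using this)
      subst this
      rfl
  | append_singleton d' m ih =>
      intro c hc hd hrel
      have hd' : List.Chain' (· < ·) d' := hd.prefix (List.prefix_append _ _)
      have hdpw : List.Pairwise (· < ·) (d' ++ [m]) := List.isChain_iff_pairwise.mp hd
      have hd'm : ∀ t ∈ d', t < m := by
        intro t ht
        have := (List.pairwise_append.mp hdpw).2.2
        exact this t ht m (List.mem_singleton_self m)
      have hlen : c.length ≤ d'.length + 1 := by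
        have := hrel.1; simpa using this
      have hgetD : ∀ r, r < c.length →
          c.getD r 0 ≤ (d' ++ [m]).getD (r + (d'.length + 1 - c.length)) 0 := by
        intro r hr
        have := hrel.2 r hr
        simpa using this
      rw [List.reverse_append, List.reverse_singleton, List.singleton_append]
      show starWord (starOne c.toFinset m) d'.reverse = (d' ++ [m]).toFinset
      rcases List.eq_nil_or_concat c with rfl | ⟨c', b, rfl⟩
      · -- c empty
        have h1 : starOne (∅ : Finset ℕ).val.toFinset m = {m} := by
          simp [starOne]
        have h1' : starOne ([] : List ℕ).toFinset m = {m} := by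
          simp [starOne]
        rw [h1']
        have : ({m} : Finset ℕ) = insert m (([] : List ℕ).toFinset) := by simp
        rw [this, starWord_insert_big d'.reverse (by simp)
          (fun a ha => hd'm a (List.mem_reverse.mp ha))]
        rw [ih [] List.isChain_nil hd' ⟨by simp, by simp⟩]
        ext t
        simp [or_comm]
      · -- c = c' ++ [b]
        simp only [List.concat_eq_append] at hc hrel hlen hgetD ⊢
        have hcpw : List.Pairwise (· < ·) (c' ++ [b]) := List.isChain_iff_pairwise.mp hc
        have hc'b : ∀ t ∈ c', t < b := by
          intro t ht
          exact (List.pairwise_append.mp hcpw).2.2 t ht b (List.mem_singleton_self b)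
        have hc' : List.Chain' (· < ·) c' := hc.prefix (List.prefix_append _ _)
        have hlen' : c'.length + 1 ≤ d'.length + 1 := by simpa using hlen
        have hbm : b ≤ m := by
          have := hgetD c'.length (by simp)
          rw [List.getD_eq_getElem?_getD] at this
          have he1 : (c' ++ [b])[c'.length]? = some b := by
            simp
          rw [he1] at this
          have he2 : c'.length + (d'.length + 1 - (c' ++ [b]).length) = d'.length := by
            simp only [List.length_append, List.length_singleton]
            omega
          rw [List.getD_eq_getElem?_getD, he2] at this
          have he3 : (d' ++ [m])[d'.length]? = some m := by simp
          rw [he3] at this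
          simpa using this
        have hbmem : b ∈ (c' ++ [b]).toFinset := by simp
        have hbmax : ∀ t ∈ (c' ++ [b]).toFinset, t ≤ m → t ≤ b := by
          intro t ht _
          simp only [List.toFinset_append, Finset.mem_union, List.mem_toFinset,
            List.toFinset_cons, List.toFinset_nil, LawfulSingleton.insert_empty_eq,
            Finset.mem_insert, Finset.mem_singleton] at ht
          rcases ht with h' | h'
          · exact le_of_lt (hc'b t h')
          · omega
        have h1 : starOne (c' ++ [b]).toFinset m
            = insert m ((c' ++ [b]).toFinset.erase b) :=
          starOne_of_max _ m b hbmem hbm hbmax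
        have h2 : (c' ++ [b]).toFinset.erase b = c'.toFinset := by
          ext t
          simp only [Finset.mem_erase, List.toFinset_append, Finset.mem_union,
            List.mem_toFinset, List.toFinset_cons, List.toFinset_nil,
            LawfulSingleton.insert_empty_eq, Finset.mem_insert, Finset.mem_singleton]
          constructor
          · rintro ⟨htb, h' | h'⟩
            · exact h'
            · omega
          · intro h'
            exact ⟨by have := hc'b t h'; omega, Or.inl h'⟩
        rw [h1, h2]
        have hc'm : ∀ t ∈ c'.toFinset, t < m := by
          intro t ht
          rw [List.mem_toFinset] at ht
          calc t < b := hc'b t ht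
            _ ≤ m := hbm
        rw [starWord_insert_big d'.reverse hc'm
          (fun a ha => hd'm a (List.mem_reverse.mp ha))]
        have hrel' : AntiRel c' d' := by
          constructor
          · omega
          · intro r hr
            have := hgetD r (by simp; omega)
            have he1 : (c' ++ [b]).getD r 0 = c'.getD r 0 := by
              rw [List.getD_eq_getElem?_getD, List.getD_eq_getElem?_getD,
                List.getElem?_append_left hr]
            have he2 : (d' ++ [m]).getD (r + (d'.length + 1 - (c' ++ [b]).length)) 0
                = d'.getD (r + (d'.length - c'.length)) 0 := by
              have hidx : r + (d'.length + 1 - (c' ++ [b]).length)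
                  = r + (d'.length - c'.length) := by
                simp only [List.length_append, List.length_singleton]
                omega
              rw [hidx, List.getD_eq_getElem?_getD, List.getD_eq_getElem?_getD,
                List.getElem?_append_left (by omega)]
            rw [he1, he2] at this
            exact this
        rw [ih c' hc' hd' hrel']
        ext t
        simp [or_comm]

lemma anti_chain_aux (A : List (List ℕ)) (c : List ℕ)
    (hc : List.Chain' (· < ·) c)
    (hcols : ∀ e ∈ A, List.Chain' (· < ·) e)
    (hchain : List.Chain AntiRel c A) :
    starWord c.toFinset (fillWord A) = (A.getLastD c).toFinset := by
  induction A generalizing c with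
  | nil => rfl
  | cons d rest ih =>
      replace hchain : AntiRel c d ∧ List.Chain AntiRel d rest := List.isChain_cons_cons.mp hchain
      have hd : List.Chain' (· < ·) d := hcols d (List.mem_cons_self)
      have h1 : fillWord (d :: rest) = d.reverse ++ fillWord rest := rfl
      rw [h1]
      show starWord c.toFinset (d.reverse ++ fillWord rest) = _
      rw [starWord, List.foldl_append]
      have h2 : List.foldl starOne c.toFinset d.reverse = d.toFinset :=
        colStep d c hc hd hchain.1
      rw [h2]
      have h3 := ih d hd (fun e he => hcols e (List.mem_cons_of_mem d he)) hchain.2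
      rw [starWord] at h3
      rw [h3]
      cases rest with
      | nil => rfl
      | cons e rest' => rfl

end StarAux

/-- **Lemma (star computes the right key).** Let `T` be an SSYT of partition
shape.  For every column index `j` (0-indexed), the set of entries of column
`j` of the right key `K₊(T)` — i.e. the rightmost column of the unique
antinormal SSYT whose column word is Knuth equivalent to that of `T_{≥j}` —
equals `∅ ⋆ word(T_{≥j})`. -/
theorem rightKey_col_eq_star (T : List (List ℕ)) (hT : IsSSYTFill T) (j : ℕ)
    (A : List (List ℕ)) (hA : IsAntiFill A)
    (hknuth : Knuth (fillWord A) (fillWord (T.drop j))) :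
    (A.getLastD []).toFinset = starWord ∅ (fillWord (T.drop j)) := by
  have hA2 := hA.2.1
  have hA3 := hA.2.2
  have hchain : List.Chain AntiRel [] A := by
    cases A with
    | nil => exact List.Chain.nil
    | cons d rest =>
        refine List.Chain.cons ⟨by simp, by simp⟩ ?_
        exact hA3
  have h1 : starWord ([] : List ℕ).toFinset (fillWord A) = (A.getLastD []).toFinset :=
    anti_chain_aux A [] List.isChain_nil hA2 hchain
  have h2 := star_knuth hknuth ∅
  rw [← h2]
  rw [← h1]
  rfl
end

section
/- Let T be a set-valued tableau of partition shape. For every j ≥ 1, the set of entries of column j of T_max equals ∅ ⋆ word(T_{≥j}), where T_{≥j} is T with its first j−1 columns removed. Equivalently, max_{P ∈ S(T)} (∅ ⋆ word(P)) = ∅ ⋆ word(T) column by column, where max is the entrywise maximum of sets of equal size (the set whose i-th smallest element is the maximum over the i-th smallest elements). -/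
namespace Tmax
open List

/-- number of elements of `A` that are `≥ v`. -/
def NE (A : Finset ℕ) (v : ℕ) : ℕ := (A.filter (fun x => v ≤ x)).card

lemma NE_zero (A : Finset ℕ) : NE A 0 = A.card := by
  unfold NE
  rw [Finset.filter_true_of_mem (fun x _ => Nat.zero_le x)]

lemma NE_anti (A : Finset ℕ) {v w : ℕ} (h : v ≤ w) : NE A w ≤ NE A v := by
  apply Finset.card_le_card
  exact Finset.monotone_filter_right A (fun x _ hx => le_trans h hx)

lemma NE_eq_countP (A : Finset ℕ) (v : ℕ) :
    NE A v = (A.sort (· ≤ ·)).countP (fun x => decide (v ≤ x)) := by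
  rw [List.countP_eq_length_filter]
  have hnd : ((A.sort (· ≤ ·)).filter (fun x => decide (v ≤ x))).Nodup :=
    (A.sort_nodup (· ≤ ·)).filter _
  have : ((A.sort (· ≤ ·)).filter (fun x => decide (v ≤ x))).toFinset = A.filter (fun x => v ≤ x) := by
    ext x
    simp [List.mem_filter, Finset.mem_filter, Finset.mem_sort]
  rw [NE, ← this, List.toFinset_card_of_nodup hnd]

lemma ithSmall_eq_zero {A : Finset ℕ} {k : ℕ} (h : A.card ≤ k) : ithSmall A k = 0 := by
  apply List.getD_eq_default
  rwa [Finset.length_sort]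

lemma sort_sorted_le' (A : Finset ℕ) {i j : ℕ} (hi : i ≤ j) (hj : j < (A.sort (· ≤ ·)).length) :
    (A.sort (· ≤ ·))[i]'(lt_of_le_of_lt hi hj) ≤ (A.sort (· ≤ ·))[j] := by
  have := (A.pairwise_sort (· ≤ ·)).rel_get_of_le
    (a := ⟨i, lt_of_le_of_lt hi hj⟩) (b := ⟨j, hj⟩) hi
  simpa using this

lemma NE_ithSmall_ge (A : Finset ℕ) {k : ℕ} (hk : k < A.card) :
    A.card - k ≤ NE A (ithSmall A k) := by
  set s := A.sort (· ≤ ·) with hs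
  have hlen : s.length = A.card := Finset.length_sort _
  have hks : k < s.length := by omega
  have hith : ithSmall A k = s[k] := by
    rw [ithSmall, ← hs, List.getD_eq_getElem s 0 hks]
  rw [NE_eq_countP, ← hs, hith]
  have hsplit : s = s.take k ++ s.drop k := (List.take_append_drop k s).symm
  have hdrop : (s.drop k).countP (fun x => decide (s[k] ≤ x)) = (s.drop k).length := by
    rw [List.countP_eq_length]
    intro a ha
    rw [List.mem_iff_getElem] at ha
    obtain ⟨n, hn, rfl⟩ := ha
    rw [List.getElem_drop]
    simp only [decide_eq_true_eq]
    have hn' : k + n < s.length := by rw [List.length_drop] at hn; omega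
    exact sort_sorted_le' A (Nat.le_add_right k n) hn'
  calc A.card - k = (s.drop k).length := by rw [List.length_drop, hlen]
    _ = (s.drop k).countP _ := hdrop.symm
    _ ≤ (s.take k).countP (fun x => decide (s[k] ≤ x)) + (s.drop k).countP (fun x => decide (s[k] ≤ x)) := Nat.le_add_left _ _
    _ = s.countP (fun x => decide (s[k] ≤ x)) := by rw [← List.countP_append, ← hsplit]

lemma ithSmall_ge_of_NE {A : Finset ℕ} {k v : ℕ} (hk : k < A.card)
    (h : A.card - k ≤ NE A v) : v ≤ ithSmall A k := by
  by_contra hlt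
  push_neg at hlt
  set s := A.sort (· ≤ ·) with hs
  have hlen : s.length = A.card := Finset.length_sort _
  have hks : k < s.length := by omega
  have hith : ithSmall A k = s[k] := by
    rw [ithSmall, ← hs, List.getD_eq_getElem s 0 hks]
  rw [hith] at hlt
  have htake : (s.take (k+1)).countP (fun x => decide (v ≤ x)) = 0 := by
    rw [List.countP_eq_zero]
    intro a ha
    rw [List.mem_iff_getElem] at ha
    obtain ⟨n, hn, rfl⟩ := ha
    have hn' : n < k + 1 := by
      have : (s.take (k+1)).length = min (k+1) s.length := List.length_take; omega
    rw [List.getElem_take]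
    simp only [decide_eq_true_eq, not_le]
    exact lt_of_le_of_lt (sort_sorted_le' A (by omega) hks) hlt
  have hcount : s.countP (fun x => decide (v ≤ x)) ≤ s.length - (k+1) := by
    conv_lhs => rw [← List.take_append_drop (k+1) s]
    rw [List.countP_append, htake, Nat.zero_add]
    calc (s.drop (k+1)).countP _ ≤ (s.drop (k+1)).length := List.countP_le_length
      _ = s.length - (k+1) := List.length_drop
  rw [NE_eq_countP, ← hs] at h
  omega

/-! ### starOne counting -/

lemma max'_filter_spec {A : Finset ℕ} {m : ℕ} (h : (A.filter (fun x => x ≤ m)).Nonempty) :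
    (A.filter (fun x => x ≤ m)).max' h ∈ A ∧ (A.filter (fun x => x ≤ m)).max' h ≤ m ∧
      ∀ y ∈ A, y ≤ m → y ≤ (A.filter (fun x => x ≤ m)).max' h := by
  have hmem := (A.filter (fun x => x ≤ m)).max'_mem h
  rw [Finset.mem_filter] at hmem
  refine ⟨hmem.1, hmem.2, fun y hy hym => Finset.le_max' _ y ?_⟩
  rw [Finset.mem_filter]
  exact ⟨hy, hym⟩

lemma NE_starOne_of_lt {A : Finset ℕ} {m v : ℕ} (hv : m < v) : NE (starOne A m) v = NE A v := by
  unfold starOne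
  split_ifs with h
  · obtain ⟨hbA, hbm, -⟩ := max'_filter_spec h
    set b := (A.filter (fun x => x ≤ m)).max' h
    unfold NE
    rw [Finset.filter_insert, if_neg (by omega), Finset.filter_erase,
      Finset.erase_eq_of_notMem]
    intro hb
    rw [Finset.mem_filter] at hb
    omega
  · unfold NE
    rw [Finset.filter_insert, if_neg (by omega)]

lemma NE_starOne_of_between {A : Finset ℕ} {m v x : ℕ} (hx : x ∈ A) (hvx : v ≤ x) (hxm : x ≤ m) :
    NE (starOne A m) v = NE A v := by
  have hne : (A.filter (fun y => y ≤ m)).Nonempty := by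
    refine ⟨x, ?_⟩
    exact Finset.mem_filter.mpr ⟨hx, hxm⟩
  obtain ⟨hbA, hbm, hbmax⟩ := max'_filter_spec hne
  unfold starOne
  rw [dif_pos hne]
  set b := (A.filter (fun y => y ≤ m)).max' hne with hb
  have hvb : v ≤ b := le_trans hvx (hbmax x hx hxm)
  by_cases hmA : m ∈ A
  · have hbm' : b = m := le_antisymm hbm (hbmax m hmA le_rfl)
    rw [hbm', Finset.insert_erase hmA]
  · unfold NE
    rw [Finset.filter_insert, if_pos (by omega), Finset.filter_erase]
    have hbf : b ∈ A.filter (fun y => v ≤ y) := Finset.mem_filter.2 ⟨hbA, hvb⟩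
    have hmf : m ∉ (A.filter (fun y => v ≤ y)).erase b := by
      intro hm
      exact hmA (Finset.mem_filter.1 (Finset.mem_of_mem_erase hm)).1
    rw [Finset.card_insert_of_notMem hmf, Finset.card_erase_of_mem hbf]
    have : 1 ≤ (A.filter (fun y => v ≤ y)).card := Finset.card_pos.2 ⟨b, hbf⟩
    omega

lemma NE_starOne_of_none {A : Finset ℕ} {m v : ℕ} (hvm : v ≤ m)
    (h : ∀ x ∈ A, x ≤ m → x < v) : NE (starOne A m) v = NE A v + 1 := by
  have hmA : m ∉ A := fun hm => by have := h m hm le_rfl; omega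
  unfold starOne
  split_ifs with hne
  · obtain ⟨hbA, hbm, -⟩ := max'_filter_spec hne
    set b := (A.filter (fun x => x ≤ m)).max' hne
    have hbv : b < v := h b hbA hbm
    unfold NE
    rw [Finset.filter_insert, if_pos hvm, Finset.filter_erase,
      Finset.erase_eq_of_notMem (by
        intro hb; rw [Finset.mem_filter] at hb; omega)]
    rw [Finset.card_insert_of_notMem (by
      intro hm; exact hmA (Finset.mem_filter.1 hm).1)]
  · unfold NE
    rw [Finset.filter_insert, if_pos hvm,
      Finset.card_insert_of_notMem (by
        intro hm; exact hmA (Finset.mem_filter.1 hm).1)]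

lemma NE_le_NE_starOne (A : Finset ℕ) (m v : ℕ) : NE A v ≤ NE (starOne A m) v := by
  rcases lt_or_ge m v with hv | hv
  · rw [NE_starOne_of_lt hv]
  · by_cases hex : ∃ x ∈ A, v ≤ x ∧ x ≤ m
    · obtain ⟨x, hx, hvx, hxm⟩ := hex
      rw [NE_starOne_of_between hx hvx hxm]
    · push_neg at hex
      rw [NE_starOne_of_none hv (fun x hx hxm => by
        rcases lt_or_ge x v with h' | h'
        · exact h'
        · exact absurd (hex x hx h') (by omega))]
      omega


lemma starWord_append_singleton (S : Finset ℕ) (w : List ℕ) (m : ℕ) :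
    starWord S (w ++ [m]) = starOne (starWord S w) m := by
  simp [starWord, List.foldl_append]

lemma NE_le_NE_starWord_snoc (w : List ℕ) (m : ℕ) (v : ℕ) :
    NE (starWord ∅ w) v ≤ NE (starWord ∅ (w ++ [m])) v := by
  rw [starWord_append_singleton]
  exact NE_le_NE_starOne _ _ _

/-- The bridge: `NE (∅ ⋆ w) v ≥ k` iff `w` has a strictly decreasing
subsequence of length `k` with all entries `≥ v`. -/
lemma bridge (w : List ℕ) (v k : ℕ) :
    k ≤ NE (starWord ∅ w) v ↔
      ∃ l, l <+ w ∧ l.Pairwise (· > ·) ∧ l.length = k ∧ ∀ x ∈ l, v ≤ x := by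
  induction w using List.reverseRecOn generalizing v k with
  | nil =>
    simp only [starWord, List.foldl_nil]
    constructor
    · intro h
      rw [show NE (∅ : Finset ℕ) v = 0 from by simp [NE]] at h
      refine ⟨[], List.nil_sublist _, List.Pairwise.nil, by simpa using (Nat.le_zero.mp h).symm, by simp⟩
    · rintro ⟨l, hl, -, rfl, -⟩
      rw [List.sublist_nil] at hl
      subst hl
      exact Nat.zero_le _
  | append_singleton w m ih =>
    rw [starWord_append_singleton]
    constructor
    · intro hk
      rcases lt_or_ge m v with hv | hv
      · rw [NE_starOne_of_lt hv] at hk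
        obtain ⟨l, hl, hp, hlen, hb⟩ := (ih v k).1 hk
        exact ⟨l, hl.trans (List.sublist_append_left w [m]), hp, hlen, hb⟩
      · by_cases hex : ∃ x ∈ starWord ∅ w, v ≤ x ∧ x ≤ m
        · obtain ⟨x, hx, hvx, hxm⟩ := hex
          rw [NE_starOne_of_between hx hvx hxm] at hk
          obtain ⟨l, hl, hp, hlen, hb⟩ := (ih v k).1 hk
          exact ⟨l, hl.trans (List.sublist_append_left w [m]), hp, hlen, hb⟩
        · push_neg at hex
          have hnone : ∀ x ∈ starWord ∅ w, x ≤ m → x < v := by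
            intro x hx hxm
            rcases lt_or_ge x v with h' | h'
            · exact h'
            · exact absurd (hex x hx h') (by omega)
          rw [NE_starOne_of_none hv hnone] at hk
          rcases Nat.eq_zero_or_pos k with rfl | hkpos
          · exact ⟨[], List.nil_sublist _, List.Pairwise.nil, rfl, by simp⟩
          · have hfe : (starWord ∅ w).filter (fun x => v ≤ x)
                = (starWord ∅ w).filter (fun x => m + 1 ≤ x) := by
              ext x
              simp only [Finset.mem_filter]
              constructor
              · rintro ⟨hx, hvx⟩
                refine ⟨hx, ?_⟩
                rcases le_or_gt x m with h' | h'
                · exact absurd (hnone x hx h') (by omega)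
                · omega
              · rintro ⟨hx, hmx⟩
                exact ⟨hx, by omega⟩
            have hk' : k - 1 ≤ NE (starWord ∅ w) (m + 1) := by
              have : NE (starWord ∅ w) v = NE (starWord ∅ w) (m+1) := by
                unfold NE; rw [hfe]
              omega
            obtain ⟨l, hl, hp, hlen, hb⟩ := (ih (m+1) (k-1)).1 hk'
            refine ⟨l ++ [m], hl.append (List.Sublist.refl [m]), ?_, by simp [hlen]; omega, ?_⟩
            · rw [List.pairwise_append]
              refine ⟨hp, List.pairwise_singleton _ _, ?_⟩
              intro a ha b hb'
              rw [List.mem_singleton] at hb'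
              subst hb'
              have := hb a ha
              omega
            · intro x hx
              rw [List.mem_append] at hx
              rcases hx with hx | hx
              · have := hb x hx; omega
              · rw [List.mem_singleton] at hx; omega
    · rintro ⟨l, hl, hp, rfl, hb⟩
      rw [List.sublist_append_iff] at hl
      obtain ⟨l₁, l₂, rfl, hl₁, hl₂⟩ := hl
      have hl₂' : l₂ = [] ∨ l₂ = [m] := List.sublist_singleton.mp hl₂
      rcases hl₂' with rfl | rfl
      · rw [List.append_nil]
        calc l₁.length ≤ NE (starWord ∅ w) v :=
              (ih v l₁.length).2 ⟨l₁, hl₁, (List.pairwise_append.1 hp).1, rfl, fun x hx => hb x (by simp [hx])⟩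
          _ ≤ NE (starOne (starWord ∅ w) m) v := NE_le_NE_starOne _ _ _
      · have hvm : v ≤ m := hb m (by simp)
        have hgt : ∀ x ∈ l₁, m < x := by
          intro x hx
          exact (List.pairwise_append.1 hp).2.2 x hx m (by simp)
        have h1 : l₁.length ≤ NE (starWord ∅ w) (m+1) :=
          (ih (m+1) l₁.length).2 ⟨l₁, hl₁, (List.pairwise_append.1 hp).1, rfl,
            fun x hx => hgt x hx⟩
        rw [List.length_append, List.length_singleton]
        by_cases hex : ∃ x ∈ starWord ∅ w, v ≤ x ∧ x ≤ m
        · obtain ⟨x, hx, hvx, hxm⟩ := hex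
          rw [NE_starOne_of_between hx hvx hxm]
          have hss : (starWord ∅ w).filter (fun y => m + 1 ≤ y)
              ⊂ (starWord ∅ w).filter (fun y => v ≤ y) := by
            constructor
            · exact Finset.monotone_filter_right _ (fun y _ hy => by omega)
            · intro hsub
              have hx1 : x ∈ (starWord ∅ w).filter (fun y => v ≤ y) :=
                Finset.mem_filter.2 ⟨hx, hvx⟩
              have hx2 := hsub hx1
              rw [Finset.mem_filter] at hx2
              omega
          have := Finset.card_lt_card hss
          unfold NE at *
          omega
        · push_neg at hex
          have hnone : ∀ x ∈ starWord ∅ w, x ≤ m → x < v := by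
            intro x hx hxm
            rcases lt_or_ge x v with h' | h'
            · exact h'
            · exact absurd (hex x hx h') (by omega)
          rw [NE_starOne_of_none hvm hnone]
          have := NE_anti (starWord ∅ w) (show v ≤ m + 1 by omega)
          omega


/-! ### min/max of cells -/

def minE (S : Finset ℕ) : ℕ := if h : S.Nonempty then S.min' h else 0
def maxE (S : Finset ℕ) : ℕ := if h : S.Nonempty then S.max' h else 0

lemma minE_mem {S : Finset ℕ} (h : S.Nonempty) : minE S ∈ S := by
  rw [minE, dif_pos h]; exact S.min'_mem h

lemma maxE_mem {S : Finset ℕ} (h : S.Nonempty) : maxE S ∈ S := by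
  rw [maxE, dif_pos h]; exact S.max'_mem h

lemma minE_le {S : Finset ℕ} {v : ℕ} (hv : v ∈ S) : minE S ≤ v := by
  rw [minE, dif_pos ⟨v, hv⟩]; exact S.min'_le v hv

lemma le_maxE {S : Finset ℕ} {v : ℕ} (hv : v ∈ S) : v ≤ maxE S := by
  rw [maxE, dif_pos ⟨v, hv⟩]; exact S.le_max' v hv

lemma minE_le_maxE {S : Finset ℕ} (h : S.Nonempty) : minE S ≤ maxE S :=
  le_trans (minE_le (maxE_mem h)) (le_refl _)

/-! ### words and sublists -/

lemma svtWord_cons (c : List (Finset ℕ)) (T : List (List (Finset ℕ))) :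
    svtWord (c :: T) = (c.reverse.map cellWord).flatten ++ svtWord T := by
  simp [svtWord]

lemma svtWord_nil : svtWord [] = [] := by simp [svtWord]

lemma fillWord_cons (c : List ℕ) (P : List (List ℕ)) :
    fillWord (c :: P) = c.reverse ++ fillWord P := by
  simp [fillWord]

lemma fillWord_nil : fillWord [] = [] := by simp [fillWord]

lemma choice_col_sublist {p : List ℕ} {cs : List (Finset ℕ)}
    (h : List.Forall₂ (· ∈ ·) p cs) : p <+ (cs.map cellWord).flatten := by
  induction h with
  | nil => simp
  | @cons x S p' cs' hx _ ih =>
    rw [List.map_cons, List.flatten_cons]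
    have hxs : [x] <+ cellWord S := List.singleton_sublist.2 (by
      rw [cellWord, Finset.mem_sort]; exact hx)
    exact List.Sublist.append hxs ih

lemma fillWord_sublist {P : List (List ℕ)} {T : List (List (Finset ℕ))}
    (h : IsChoice P T) : fillWord P <+ svtWord T := by
  induction h with
  | nil => simp [fillWord, svtWord]
  | @cons p c P' T' hpc _ ih =>
    rw [fillWord_cons, svtWord_cons]
    refine List.Sublist.append ?_ ih
    exact choice_col_sublist (List.forall₂_reverse_iff.2 hpc)

/-- a decreasing sublist of a cell word has length at most 1 -/
lemma short_of_sublist_cellWord {a : List ℕ} {S : Finset ℕ}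
    (ha : a <+ cellWord S) (hp : a.Pairwise (· > ·)) :
    a = [] ∨ ∃ x, a = [x] ∧ x ∈ S := by
  match a with
  | [] => exact Or.inl rfl
  | [x] =>
    refine Or.inr ⟨x, rfl, ?_⟩
    rw [← Finset.mem_sort (α := ℕ) (· ≤ ·), ← cellWord]
    exact (List.singleton_sublist).1 ha
  | x :: y :: t =>
    exfalso
    have hlt : List.Pairwise (· < ·) (x :: y :: t) :=
      (List.sortedLT_iff_pairwise.1 S.sortedLT_sort).sublist ha
    have h1 : x < y := (List.pairwise_cons.1 hlt).1 y (by simp)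
    have h2 : x > y := (List.pairwise_cons.1 hp).1 y (by simp)
    omega

/-- existence of a choice containing a given decreasing sublist: column version -/
lemma exc (cs : List (Finset ℕ)) (hne : ∀ S ∈ cs, S.Nonempty) :
    ∀ l, l <+ (cs.map cellWord).flatten → l.Pairwise (· > ·) →
      ∃ p, List.Forall₂ (· ∈ ·) p cs ∧ l <+ p := by
  induction cs with
  | nil =>
    intro l hl _
    simp only [List.map_nil, List.flatten_nil, List.sublist_nil] at hl
    exact ⟨[], List.Forall₂.nil, by simp [hl]⟩
  | cons S cs' ih =>
    intro l hl hp
    rw [List.map_cons, List.flatten_cons, List.sublist_append_iff] at hl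
    obtain ⟨a, b, rfl, ha, hb⟩ := hl
    have hpa : a.Pairwise (· > ·) := hp.sublist (List.sublist_append_left a b)
    have hpb : b.Pairwise (· > ·) := hp.sublist (List.sublist_append_right a b)
    obtain ⟨p', hp', hbp'⟩ := ih (fun S' hS' => hne S' (by simp [hS'])) b hb hpb
    rcases short_of_sublist_cellWord ha hpa with rfl | ⟨x, rfl, hx⟩
    · refine ⟨minE S :: p', List.Forall₂.cons (minE_mem (hne S (by simp))) hp', ?_⟩
      rw [List.nil_append]
      exact hbp'.trans (List.sublist_cons_self _ _)
    · exact ⟨x :: p', List.Forall₂.cons hx hp', by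
        rw [List.singleton_append]; exact hbp'.cons₂ x⟩

/-- existence of a choice containing a given decreasing sublist -/
lemma exP (T : List (List (Finset ℕ))) (hne : ∀ c ∈ T, ∀ S ∈ c, S.Nonempty) :
    ∀ l, l <+ svtWord T → l.Pairwise (· > ·) →
      ∃ P, IsChoice P T ∧ l <+ fillWord P := by
  induction T with
  | nil =>
    intro l hl _
    rw [svtWord_nil, List.sublist_nil] at hl
    exact ⟨[], List.Forall₂.nil, by simp [hl, fillWord_nil]⟩
  | cons c rest ih =>
    intro l hl hp
    rw [svtWord_cons, List.sublist_append_iff] at hl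
    obtain ⟨a, b, rfl, ha, hb⟩ := hl
    have hpa : a.Pairwise (· > ·) := hp.sublist (List.sublist_append_left a b)
    have hpb : b.Pairwise (· > ·) := hp.sublist (List.sublist_append_right a b)
    obtain ⟨p, hpc, hap⟩ := exc c.reverse
      (fun S hS => hne c (by simp) S (by rw [List.mem_reverse] at hS; exact hS)) a ha hpa
    obtain ⟨P', hP', hbP'⟩ := ih (fun c' hc' => hne c' (by simp [hc'])) b hb hpb
    refine ⟨p.reverse :: P', List.Forall₂.cons ?_ hP', ?_⟩
    · have := List.forall₂_reverse_iff.2 hpc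
      rwa [List.reverse_reverse] at this
    · rw [fillWord_cons, List.reverse_reverse]
      exact List.Sublist.append hap hbP'

/-! ### countP helpers -/

lemma countP_transfer (p q : Finset ℕ → Bool) :
    ∀ (l1 l0 : List (Finset ℕ)), l1.length ≤ l0.length →
      (∀ r, r < l1.length → p (l1.getD r ∅) → q (l0.getD r ∅)) →
      l1.countP p ≤ l0.countP q := by
  intro l1
  induction l1 with
  | nil => intro l0 _ _; simp
  | cons a t ih =>
    intro l0 hlen himp
    match l0 with
    | [] => simp at hlen
    | b :: t0 =>
      rw [List.countP_cons, List.countP_cons]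
      have h0 : p a → q b := by
        have := himp 0 (by simp)
        simpa using this
      have ht : t.countP p ≤ t0.countP q := by
        refine ih t0 (by simpa using hlen) ?_
        intro r hr hpr
        have := himp (r+1) (by simpa using Nat.succ_lt_succ hr)
        simpa using this hpr
      by_cases hpa : p a
      · rw [if_pos hpa, if_pos (h0 hpa)]; omega
      · rw [if_neg hpa]
        split_ifs <;> omega

lemma countP_disj_sum (p q r : Finset ℕ → Bool) :
    ∀ (l : List (Finset ℕ)), (∀ x ∈ l, p x → r x) → (∀ x ∈ l, q x → r x) →
      (∀ x ∈ l, ¬(p x ∧ q x)) → l.countP p + l.countP q ≤ l.countP r := by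
  intro l
  induction l with
  | nil => intro _ _ _; simp
  | cons a t ih =>
    intro hpr hqr hpq
    rw [List.countP_cons, List.countP_cons, List.countP_cons]
    have iht := ih (fun x hx => hpr x (by simp [hx])) (fun x hx => hqr x (by simp [hx]))
      (fun x hx => hpq x (by simp [hx]))
    have h1 := hpr a (by simp)
    have h2 := hqr a (by simp)
    have h3 := hpq a (by simp)
    by_cases hpa : p a <;> by_cases hqa : q a <;>
      simp_all <;> omega

/-! ### head/last helpers -/

lemma headD_mem {l : List ℕ} (h : l ≠ []) : l.headD 0 ∈ l := by
  cases l with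
  | nil => exact absurd rfl h
  | cons x t => simp

lemma getLastD_mem {l : List ℕ} (h : l ≠ []) : l.getLastD 0 ∈ l := by
  cases l with
  | nil => exact absurd rfl h
  | cons x t =>
    rw [List.getLastD_cons]
    exact List.getLastD_mem_cons

lemma getLastD_cons_ne {x : ℕ} {b : List ℕ} (h : b ≠ []) :
    (x :: b).getLastD 0 = b.getLastD 0 := by
  cases b with
  | nil => exact absurd rfl h
  | cons y t => rw [List.getLastD_cons, List.getLastD_cons, List.getLastD_cons]

lemma headD_append_ne {l₁ l₂ : List ℕ} (h : l₁ ≠ []) :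
    (l₁ ++ l₂).headD 0 = l₁.headD 0 := by
  cases l₁ with
  | nil => exact absurd rfl h
  | cons x t => simp

lemma getLastD_le_headD {l : List ℕ} (hp : l.Pairwise (· > ·)) (h : l ≠ []) :
    l.getLastD 0 ≤ l.headD 0 := by
  cases l with
  | nil => exact absurd rfl h
  | cons x t =>
    rw [List.getLastD_cons, List.headD_cons]
    have hmem : t.getLastD x ∈ x :: t := List.getLastD_mem_cons
    rcases List.mem_cons.1 hmem with h' | h'
    · omega
    · have := (List.pairwise_cons.1 hp).1 _ h'
      omega

/-! ### the column counting bound -/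

lemma col_count (cs : List (Finset ℕ)) :
    ∀ l, l <+ (cs.map cellWord).flatten → l.Pairwise (· > ·) → l ≠ [] →
      l.length ≤ cs.countP
        (fun S => decide (minE S ≤ l.headD 0) && decide (l.getLastD 0 ≤ maxE S)) := by
  induction cs with
  | nil =>
    intro l hl _ hne
    simp only [List.map_nil, List.flatten_nil, List.sublist_nil] at hl
    exact absurd hl hne
  | cons S cs' ih =>
    intro l hl hp hne
    rw [List.map_cons, List.flatten_cons, List.sublist_append_iff] at hl
    obtain ⟨a, b, rfl, ha, hb⟩ := hl
    have hpa : a.Pairwise (· > ·) := hp.sublist (List.sublist_append_left a b)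
    have hpb : b.Pairwise (· > ·) := hp.sublist (List.sublist_append_right a b)
    rcases short_of_sublist_cellWord ha hpa with rfl | ⟨x, rfl, hx⟩
    · -- nothing chosen from the head cell
      rw [List.nil_append] at hne ⊢
      calc b.length ≤ cs'.countP _ := ih b hb hpb hne
        _ ≤ (S :: cs').countP _ := by rw [List.countP_cons]; omega
    · -- one element x ∈ S chosen
      rw [List.singleton_append] at hne hp ⊢
      cases b with
      | nil =>
        have hpred : (fun S' => decide (minE S' ≤ ([x] : List ℕ).headD 0) &&
            decide (([x] : List ℕ).getLastD 0 ≤ maxE S')) S = true := by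
          simp only [List.headD_cons, List.getLastD_cons, Bool.and_eq_true, decide_eq_true_eq]
          simp only [List.getLastD_nil, decide_eq_true_eq]
          exact ⟨decide_eq_true (minE_le hx), le_maxE hx⟩
        rw [List.countP_cons, if_pos hpred]
        simp
      | cons y t =>
        set b := y :: t with hbdef
        have hbne : b ≠ [] := by simp [hbdef]
        have hgt : ∀ z ∈ b, z < x := by
          intro z hz
          exact (List.pairwise_cons.1 hp).1 z hz
        have hhd : (x :: b).headD 0 = x := by simp
        have hlast : (x :: b).getLastD 0 = b.getLastD 0 := getLastD_cons_ne hbne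
        have ihb := ih b hb hpb hbne
        have hmono : cs'.countP (fun S' => decide (minE S' ≤ b.headD 0) &&
              decide (b.getLastD 0 ≤ maxE S'))
            ≤ cs'.countP (fun S' => decide (minE S' ≤ (x :: b).headD 0) &&
              decide ((x :: b).getLastD 0 ≤ maxE S')) := by
          apply List.countP_mono_left
          intro S' _ hS'
          simp only [Bool.and_eq_true, decide_eq_true_eq] at hS' ⊢
          rw [hhd, hlast]
          refine ⟨le_trans hS'.1 ?_, hS'.2⟩
          exact le_of_lt (hgt _ (headD_mem hbne))
        have hpred : (fun S' => decide (minE S' ≤ (x :: b).headD 0) &&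
            decide ((x :: b).getLastD 0 ≤ maxE S')) S = true := by
          simp only [Bool.and_eq_true, decide_eq_true_eq]
          rw [hhd, hlast]
          refine ⟨minE_le hx, ?_⟩
          calc b.getLastD 0 ≤ x := le_of_lt (hgt _ (getLastD_mem hbne))
            _ ≤ maxE S := le_maxE hx
        rw [List.countP_cons, if_pos hpred]
        have : (x :: b).length = b.length + 1 := by simp
        omega

/-- the structural relation between consecutive columns of an SVT -/
def colRel (c d : List (Finset ℕ)) : Prop :=
  d.length ≤ c.length ∧ ∀ r, r < d.length → maxE (c.getD r ∅) ≤ minE (d.getD r ∅)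

lemma cell_nonempty_of_getD {c : List (Finset ℕ)} (hne : ∀ S ∈ c, S.Nonempty)
    {r : ℕ} (hr : r < c.length) : (c.getD r ∅).Nonempty := by
  rw [List.getD_eq_getElem c ∅ hr]
  exact hne _ (List.getElem_mem hr)

/-- key upper bound: a decreasing sublist of the word of a structured SVT is
counted by cells of the first column with small enough minimum. -/
lemma svt_count (T : List (List (Finset ℕ))) :
    (∀ c ∈ T, ∀ S ∈ c, S.Nonempty) → List.Chain' colRel T →
    ∀ l, l <+ svtWord T → l.Pairwise (· > ·) →
      l.length ≤ (T.headD []).countP (fun S => decide (minE S ≤ l.headD 0)) := by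
  induction T with
  | nil =>
    intro _ _ l hl _
    rw [svtWord_nil, List.sublist_nil] at hl
    simp [hl]
  | cons c rest ih =>
    intro hne hchain l hl hp
    rw [svtWord_cons, List.sublist_append_iff] at hl
    obtain ⟨l₁, l₂, rfl, hl₁, hl₂⟩ := hl
    have hpl₁ : l₁.Pairwise (· > ·) := hp.sublist (List.sublist_append_left _ _)
    have hpl₂ : l₂.Pairwise (· > ·) := hp.sublist (List.sublist_append_right _ _)
    have hnec : ∀ S ∈ c, S.Nonempty := hne c (by simp)
    have hnerest : ∀ c' ∈ rest, ∀ S ∈ c', S.Nonempty := fun c' hc' => hne c' (by simp [hc'])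
    have hchainrest : List.Chain' colRel rest := hchain.tail
    simp only [List.headD_cons]
    by_cases hl₁e : l₁ = []
    · subst hl₁e
      rw [List.nil_append] at hp ⊢
      cases rest with
      | nil =>
        rw [svtWord_nil, List.sublist_nil] at hl₂
        simp [hl₂]
      | cons d rest' =>
        have hcd : colRel c d := (List.isChain_cons.1 hchain).1 d rfl
        have ih2 := ih hnerest hchainrest l₂ hl₂ hpl₂
        simp only [List.headD_cons] at ih2
        refine le_trans ih2 ?_
        refine countP_transfer _ _ d c hcd.1 ?_
        intro r hr hpr
        simp only [decide_eq_true_eq] at hpr ⊢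
        have h1 : minE (c.getD r ∅) ≤ maxE (c.getD r ∅) :=
          minE_le_maxE (cell_nonempty_of_getD hnec (lt_of_lt_of_le hr hcd.1))
        have h2 := hcd.2 r hr
        omega
    · -- l₁ nonempty
      have hhd : (l₁ ++ l₂).headD 0 = l₁.headD 0 := headD_append_ne hl₁e
      have hA : l₁.length ≤ c.countP
          (fun S => decide (minE S ≤ l₁.headD 0) && decide (l₁.getLastD 0 ≤ maxE S)) := by
        have := col_count c.reverse l₁ hl₁ hpl₁ hl₁e
        rwa [List.countP_reverse] at this
      by_cases hl₂e : l₂ = []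
      · subst hl₂e
        rw [List.append_nil] at hhd ⊢
        refine le_trans hA ?_
        apply List.countP_mono_left
        intro S _ hS
        simp only [Bool.and_eq_true, decide_eq_true_eq] at hS ⊢
        rw [hhd]
        exact hS.1
      · -- both parts nonempty
        have hlt : l₂.headD 0 < l₁.getLastD 0 := by
          have := (List.pairwise_append.1 hp).2.2 _ (getLastD_mem hl₁e) _ (headD_mem hl₂e)
          exact this
        have hB : l₂.length ≤ c.countP (fun S => decide (maxE S < l₁.getLastD 0)) := by
          cases rest with
          | nil =>
            rw [svtWord_nil, List.sublist_nil] at hl₂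
            exact absurd hl₂ hl₂e
          | cons d rest' =>
            have hcd : colRel c d := (List.isChain_cons.1 hchain).1 d rfl
            have ih2 := ih hnerest hchainrest l₂ hl₂ hpl₂
            simp only [List.headD_cons] at ih2
            refine le_trans ih2 ?_
            refine countP_transfer _ _ d c hcd.1 ?_
            intro r hr hpr
            simp only [decide_eq_true_eq] at hpr ⊢
            have h2 := hcd.2 r hr
            omega
        have hsum := countP_disj_sum
          (fun S => decide (minE S ≤ l₁.headD 0) && decide (l₁.getLastD 0 ≤ maxE S))
          (fun S => decide (maxE S < l₁.getLastD 0))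
          (fun S => decide (minE S ≤ (l₁ ++ l₂).headD 0)) c
          (by
            intro S _ hS
            simp only [Bool.and_eq_true, decide_eq_true_eq] at hS ⊢
            rw [hhd]; exact hS.1)
          (by
            intro S hS hS'
            simp only [decide_eq_true_eq] at hS' ⊢
            rw [hhd]
            have h1 : minE S ≤ maxE S := minE_le_maxE (hnec S hS)
            have h2 : l₁.getLastD 0 ≤ l₁.headD 0 := getLastD_le_headD hpl₁ hl₁e
            omega)
          (by
            intro S hSmem h
            simp only [Bool.and_eq_true, decide_eq_true_eq] at h
            omega)
        rw [List.length_append]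
        omega

/-! ### choices from index functions -/

def chooseF (T : List (List (Finset ℕ))) (f : ℕ → ℕ → Finset ℕ → ℕ) : List (List ℕ) :=
  T.mapIdx fun i c => c.mapIdx fun r S => f i r S

lemma chooseF_length (T : List (List (Finset ℕ))) (f : ℕ → ℕ → Finset ℕ → ℕ) :
    (chooseF T f).length = T.length := by simp [chooseF]

lemma chooseF_getElem (T : List (List (Finset ℕ))) (f : ℕ → ℕ → Finset ℕ → ℕ)
    (i : ℕ) (hi : i < T.length) :
    (chooseF T f)[i]'(by simpa [chooseF] using hi) = T[i].mapIdx (fun r S => f i r S) := by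
  simp [chooseF]

lemma chooseF_isChoice {T : List (List (Finset ℕ))} (hne : ∀ c ∈ T, ∀ S ∈ c, S.Nonempty)
    (f : ℕ → ℕ → Finset ℕ → ℕ) (hf : ∀ i r S, S.Nonempty → f i r S ∈ S) :
    IsChoice (chooseF T f) T := by
  rw [IsChoice, List.forall₂_iff_get]
  refine ⟨chooseF_length T f, ?_⟩
  intro i h₁ h₂
  rw [List.get_eq_getElem, List.get_eq_getElem, chooseF_getElem T f i h₂]
  rw [List.forall₂_iff_get]
  refine ⟨by simp, ?_⟩
  intro r hr₁ hr₂
  rw [List.get_eq_getElem, List.get_eq_getElem, List.getElem_mapIdx]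
  exact hf i r _ (hne T[i] (List.getElem_mem h₂) _ (List.getElem_mem hr₂))

lemma struct_of_SVT {T : List (List (Finset ℕ))} (hT : IsSVT T) : List.Chain' colRel T := by
  obtain ⟨hne, hch⟩ := hT
  show List.IsChain colRel T
  rw [List.isChain_iff_getElem]
  intro i hi
  have hi1 : i + 1 < T.length := by omega
  have hi0 : i < T.length := by omega
  -- the length inequality, via the canonical choice
  have hP₀ : IsChoice (chooseF T (fun _ _ S => minE S)) T :=
    chooseF_isChoice hne _ (fun _ _ S hS => minE_mem hS)
  have hshape₀ : List.IsChain _ _ := (hch _ hP₀).2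
  rw [List.isChain_iff_getElem] at hshape₀
  have hs₀ := hshape₀ i (by simp only [chooseF_length]; omega)
  rw [chooseF_getElem T _ i hi0, chooseF_getElem T _ (i+1) hi1] at hs₀
  simp only [List.length_mapIdx] at hs₀
  have hlen : T[i+1].length ≤ T[i].length := hs₀.1
  refine ⟨hlen, ?_⟩
  -- the row inequality, via a surgical choice
  intro r hr
  set f : ℕ → ℕ → Finset ℕ → ℕ :=
    fun i' r' S => if i' = i ∧ r' = r then maxE S else minE S with hfdef
  have hf : ∀ i' r' S, S.Nonempty → f i' r' S ∈ S := by
    intro i' r' S hS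
    rw [hfdef]
    dsimp only
    split_ifs
    · exact maxE_mem hS
    · exact minE_mem hS
  have hP : IsChoice (chooseF T f) T := chooseF_isChoice hne f hf
  have hshape : List.IsChain _ _ := (hch _ hP).2
  rw [List.isChain_iff_getElem] at hshape
  have hs := hshape i (by simp only [chooseF_length]; omega)
  rw [chooseF_getElem T f i hi0, chooseF_getElem T f (i+1) hi1] at hs
  have hrow := hs.2 r (by simpa using hr)
  have hrc : r < T[i].length := lt_of_lt_of_le hr hlen
  rw [List.getD_eq_getElem _ 0 (by simpa using hrc),
      List.getD_eq_getElem _ 0 (by simpa using hr),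
      List.getElem_mapIdx, List.getElem_mapIdx] at hrow
  have e1 : f i r (T[i][r]) = maxE (T[i][r]) := by rw [hfdef]; simp
  have e2 : f (i+1) r (T[i+1][r]) = minE (T[i+1][r]) := by
    rw [hfdef]; simp only; rw [if_neg (by omega)]
  rw [e1, e2] at hrow
  rw [List.getD_eq_getElem _ ∅ hrc, List.getD_eq_getElem _ ∅ hr]
  exact hrow

lemma chain'_drop {α : Type*} {R : α → α → Prop} (n : ℕ) {l : List α}
    (h : List.Chain' R l) : List.Chain' R (l.drop n) := by
  induction n with
  | zero => simpa using h
  | succ n ih =>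
    rw [← List.tail_drop]
    exact ih.tail

lemma canon_isChoice {T : List (List (Finset ℕ))} (hne : ∀ c ∈ T, ∀ S ∈ c, S.Nonempty) :
    IsChoice (T.map (List.map minE)) T := by
  rw [IsChoice, List.forall₂_map_left_iff, List.forall₂_same]
  intro c hc
  rw [List.forall₂_map_left_iff, List.forall₂_same]
  intro S hS
  exact minE_mem (hne c hc S hS)

/-! ### master lemmas -/

lemma col0_len_eq {Q : List (List ℕ)} {T : List (List (Finset ℕ))} (h : IsChoice Q T) :
    (Q.headD []).length = (T.headD []).length := by
  cases h with
  | nil => rfl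
  | cons h' _ => simpa using h'.length_eq

lemma master1 (T' : List (List (Finset ℕ))) (hne : ∀ c ∈ T', ∀ S ∈ c, S.Nonempty)
    (hchain : List.Chain' colRel T') (Q : List (List ℕ)) (hQ : IsChoice Q T')
    (hQ1 : List.Chain' (· < ·) (Q.headD [])) :
    (starWord ∅ (fillWord Q)).card = (starWord ∅ (svtWord T')).card ∧
      ∀ v, NE (starWord ∅ (fillWord Q)) v ≤ NE (starWord ∅ (svtWord T')) v := by
  have hdom : ∀ v, NE (starWord ∅ (fillWord Q)) v ≤ NE (starWord ∅ (svtWord T')) v := by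
    intro v
    obtain ⟨l, hl, hp, hlen, hb⟩ := (bridge (fillWord Q) v _).1 le_rfl
    exact (bridge (svtWord T') v _).2 ⟨l, hl.trans (fillWord_sublist hQ), hp, hlen, hb⟩
  refine ⟨?_, hdom⟩
  have hTle : (starWord ∅ (svtWord T')).card ≤ (T'.headD []).length := by
    obtain ⟨l, hl, hp, hlen, -⟩ := (bridge (svtWord T') 0 _).1 le_rfl
    have hc := svt_count T' hne hchain l hl hp
    calc (starWord ∅ (svtWord T')).card = NE (starWord ∅ (svtWord T')) 0 := (NE_zero _).symm
      _ = l.length := hlen.symm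
      _ ≤ _ := hc
      _ ≤ (T'.headD []).length := List.countP_le_length
  have hQge : (Q.headD []).length ≤ (starWord ∅ (fillWord Q)).card := by
    have hsub : (Q.headD []).reverse <+ fillWord Q := by
      cases Q with
      | nil => simp [fillWord_nil]
      | cons q P' =>
        rw [fillWord_cons]
        simp only [List.headD_cons]
        exact List.sublist_append_left q.reverse (fillWord P')
    have hpr : (Q.headD []).reverse.Pairwise (· > ·) := by
      have hps : (Q.headD []).Pairwise (· < ·) := List.isChain_iff_pairwise.1 hQ1
      exact List.pairwise_reverse.2 (hps.imp fun h => h)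
    have hBield := (bridge (fillWord Q) 0 (Q.headD []).reverse.length).2
      ⟨_, hsub, hpr, rfl, fun x _ => Nat.zero_le x⟩
    rw [NE_zero] at hBield
    simpa using hBield
  have h1 : (starWord ∅ (fillWord Q)).card ≤ (starWord ∅ (svtWord T')).card := by
    have := hdom 0
    rwa [NE_zero, NE_zero] at this
  have h2 := col0_len_eq hQ
  omega

lemma ith_le_of_NE_le {A B : Finset ℕ} (hcard : A.card = B.card)
    (hN : ∀ v, NE A v ≤ NE B v) (k : ℕ) : ithSmall A k ≤ ithSmall B k := by
  rcases lt_or_ge k A.card with hk | hk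
  · have h1 : A.card - k ≤ NE A (ithSmall A k) := NE_ithSmall_ge A hk
    have h2 : B.card - k ≤ NE B (ithSmall A k) := by
      rw [← hcard]; exact le_trans h1 (hN _)
    exact ithSmall_ge_of_NE (by omega) h2
  · rw [ithSmall_eq_zero hk]; exact Nat.zero_le _

lemma master2 (T' : List (List (Finset ℕ))) (hne : ∀ c ∈ T', ∀ S ∈ c, S.Nonempty)
    (k : ℕ) (hk : k < (starWord ∅ (svtWord T')).card) :
    ∃ Q, IsChoice Q T' ∧
      (starWord ∅ (svtWord T')).card - k ≤
        NE (starWord ∅ (fillWord Q)) (ithSmall (starWord ∅ (svtWord T')) k) := by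
  have h1 := NE_ithSmall_ge (starWord ∅ (svtWord T')) hk
  obtain ⟨l, hl, hp, hlen, hb⟩ := (bridge (svtWord T') _ _).1 h1
  obtain ⟨Q, hQ, hlQ⟩ := exP T' hne l hl hp
  exact ⟨Q, hQ, (bridge (fillWord Q) _ _).2 ⟨l, hlQ, hp, hlen, hb⟩⟩

end Tmax

/-- **Lemma (computation of `T_max`).** Let `T` be a set-valued tableau of
partition shape.  For every column index `j` (0-indexed), the column
`∅ ⋆ word(T_{≥j})` (which is `svtKeyCol T j`) is the entrywise maximum, over
all choices `P ∈ S(T)`, of column `j` of `K₊(P) = ∅ ⋆ word(P_{≥j})`: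
each such column is entrywise at most `∅ ⋆ word(T_{≥j})`, and each entry of
`∅ ⋆ word(T_{≥j})` is achieved by some choice `P`. -/
theorem tmax_col_eq_star (T : List (List (Finset ℕ))) (hT : IsSVT T) (j : ℕ) :
    (∀ P, IsChoice P T →
      (starWord ∅ (fillWord (P.drop j))).card = (svtKeyCol T j).card ∧
      ∀ k, ithSmall (starWord ∅ (fillWord (P.drop j))) k ≤ ithSmall (svtKeyCol T j) k) ∧
    (∀ k, ∃ P, IsChoice P T ∧
      ithSmall (starWord ∅ (fillWord (P.drop j))) k = ithSmall (svtKeyCol T j) k) := by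
  classical
  obtain ⟨hne, hch⟩ := hT
  have hchain : List.Chain' Tmax.colRel T := Tmax.struct_of_SVT ⟨hne, hch⟩
  have hne' : ∀ c ∈ T.drop j, ∀ S ∈ c, S.Nonempty :=
    fun c hc => hne c (List.drop_subset j T hc)
  have hchain' : List.Chain' Tmax.colRel (T.drop j) := Tmax.chain'_drop j hchain
  have key : svtKeyCol T j = starWord ∅ (svtWord (T.drop j)) := rfl
  have part1 : ∀ P, IsChoice P T →
      (starWord ∅ (fillWord (P.drop j))).card = (svtKeyCol T j).card ∧
      ∀ k, ithSmall (starWord ∅ (fillWord (P.drop j))) k ≤ ithSmall (svtKeyCol T j) k := by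
    intro P hP
    have hQ : IsChoice (P.drop j) (T.drop j) := List.forall₂_drop j hP
    have hQ1 : List.Chain' (· < ·) ((P.drop j).headD []) := by
      cases hdj : P.drop j with
      | nil => exact List.isChain_nil
      | cons q t =>
        have hq : q ∈ P := List.drop_subset j P (by rw [hdj]; simp)
        simpa using (hch P hP).1 q hq
    obtain ⟨hcard, hdom⟩ := Tmax.master1 (T.drop j) hne' hchain' (P.drop j) hQ hQ1
    rw [key]
    exact ⟨hcard, fun k => Tmax.ith_le_of_NE_le hcard hdom k⟩
  refine ⟨part1, ?_⟩
  intro k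
  by_cases hk : k < (svtKeyCol T j).card
  · -- an optimal choice achieving the k-th entry
    obtain ⟨Q, hQ, hNE⟩ := Tmax.master2 (T.drop j) hne' k (key ▸ hk)
    have hjlen : j ≤ T.length := by
      by_contra h
      push_neg at h
      have hTd : T.drop j = [] := List.drop_eq_nil_of_le (le_of_lt h)
      rw [key, hTd, Tmax.svtWord_nil] at hk
      simp [starWord] at hk
    have hPre : IsChoice ((T.take j).map (List.map Tmax.minE)) (T.take j) :=
      Tmax.canon_isChoice (fun c hc => hne c (List.take_subset j T hc))
    have hlenPre : ((T.take j).map (List.map Tmax.minE)).length = j := by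
      rw [List.length_map, List.length_take]
      omega
    set P := (T.take j).map (List.map Tmax.minE) ++ Q with hPdef
    have hP : IsChoice P T := by
      have := List.rel_append hPre hQ
      dsimp only at this
      rwa [List.take_append_drop] at this
    have hdropP : P.drop j = Q := by
      have h0 : P.drop ((T.take j).map (List.map Tmax.minE)).length = Q :=
        List.drop_left
      rwa [hlenPre] at h0
    refine ⟨P, hP, ?_⟩
    have hcard := (part1 P hP).1
    have hle := (part1 P hP).2 k
    rw [hdropP] at hcard hle ⊢
    refine le_antisymm hle ?_
    have hkQ : k < (starWord ∅ (fillWord Q)).card := by rw [hcard]; exact hk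
    refine Tmax.ithSmall_ge_of_NE hkQ ?_
    rw [hcard, key]
    exact hNE
  · -- out of range: both sides are zero
    push_neg at hk
    refine ⟨T.map (List.map Tmax.minE), Tmax.canon_isChoice hne, ?_⟩
    have hcard := (part1 (T.map (List.map Tmax.minE)) (Tmax.canon_isChoice hne)).1
    rw [Tmax.ithSmall_eq_zero hk, Tmax.ithSmall_eq_zero (by omega)]
end

section
/- For every set-valued tableau T of partition shape, the tableau T_max is a key; that is, T_max is a semistandard Young tableau of partition shape in which every entry of column j also appears in column j−1. -/
/-- number of elements `≤ b` -/
def cnt (S : Finset ℕ) (b : ℕ) : ℕ := (S.filter (fun x => x ≤ b)).card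

lemma starWord_nil (S : Finset ℕ) : starWord S [] = S := rfl
lemma starWord_cons (S : Finset ℕ) (a : ℕ) (w : List ℕ) :
    starWord S (a :: w) = starWord (starOne S a) w := rfl
lemma starWord_append (S : Finset ℕ) (v w : List ℕ) :
    starWord S (v ++ w) = starWord (starWord S v) w := List.foldl_append

lemma cnt_mono_set {A B : Finset ℕ} (h : A ⊆ B) (b : ℕ) : cnt A b ≤ cnt B b :=
  Finset.card_le_card (Finset.filter_subset_filter _ h)

lemma cnt_mono_le (S : Finset ℕ) {b b' : ℕ} (h : b ≤ b') : cnt S b ≤ cnt S b' := by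
  apply Finset.card_le_card
  intro x hx
  simp only [Finset.mem_filter] at hx ⊢
  exact ⟨hx.1, hx.2.trans h⟩

lemma cnt_le_card (S : Finset ℕ) (b : ℕ) : cnt S b ≤ S.card :=
  Finset.card_le_card (Finset.filter_subset _ _)

lemma exists_of_cnt_pos {S : Finset ℕ} {b : ℕ} (h : 0 < cnt S b) : ∃ y ∈ S, y ≤ b := by
  obtain ⟨y, hy⟩ := Finset.card_pos.mp h
  simp only [Finset.mem_filter] at hy
  exact ⟨y, hy.1, hy.2⟩

lemma mem_cnt {S : Finset ℕ} {y b : ℕ} (hy : y ∈ S) (hyb : y ≤ b) : 0 < cnt S b :=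
  Finset.card_pos.mpr ⟨y, Finset.mem_filter.mpr ⟨hy, hyb⟩⟩

section replace
variable {S : Finset ℕ} {a : ℕ}

/-- the replaced element -/
noncomputable def repl (S : Finset ℕ) (a : ℕ) : ℕ :=
  if h : (S.filter (fun x => x ≤ a)).Nonempty then (S.filter (fun x => x ≤ a)).max' h else 0

lemma filter_nonempty (h : ∃ y ∈ S, y ≤ a) : (S.filter (fun x => x ≤ a)).Nonempty := by
  obtain ⟨y, hy, hya⟩ := h
  exact ⟨y, Finset.mem_filter.mpr ⟨hy, hya⟩⟩

lemma repl_mem (h : ∃ y ∈ S, y ≤ a) : repl S a ∈ S := by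
  rw [repl, dif_pos (filter_nonempty h)]
  have := Finset.max'_mem _ (filter_nonempty h)
  exact (Finset.mem_filter.mp this).1

lemma repl_le (h : ∃ y ∈ S, y ≤ a) : repl S a ≤ a := by
  rw [repl, dif_pos (filter_nonempty h)]
  have := Finset.max'_mem _ (filter_nonempty h)
  exact (Finset.mem_filter.mp this).2

lemma le_repl (h : ∃ y ∈ S, y ≤ a) {y : ℕ} (hy : y ∈ S) (hya : y ≤ a) : y ≤ repl S a := by
  rw [repl, dif_pos (filter_nonempty h)]
  apply Finset.le_max'
  exact Finset.mem_filter.mpr ⟨hy, hya⟩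

lemma starOne_eq_replace (h : ∃ y ∈ S, y ≤ a) :
    starOne S a = insert a (S.erase (repl S a)) := by
  rw [starOne, dif_pos (filter_nonempty h), repl, dif_pos (filter_nonempty h)]

lemma starOne_eq_insert (h : ¬ ∃ y ∈ S, y ≤ a) : starOne S a = insert a S := by
  rw [starOne, dif_neg]
  intro ⟨y, hy⟩
  exact h ⟨y, (Finset.mem_filter.mp hy).1, (Finset.mem_filter.mp hy).2⟩

lemma not_mem_erase_repl (h : ∃ y ∈ S, y ≤ a) : a ∉ S.erase (repl S a) := by
  intro ha
  have h1 : a ∈ S := Finset.mem_of_mem_erase ha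
  have h2 : a ≤ repl S a := le_repl h h1 le_rfl
  have h3 : repl S a ≤ a := repl_le h
  exact (Finset.ne_of_mem_erase ha) (le_antisymm h2 h3)

lemma mem_starOne_self (S : Finset ℕ) (a : ℕ) : a ∈ starOne S a := by
  by_cases h : ∃ y ∈ S, y ≤ a
  · rw [starOne_eq_replace h]; exact Finset.mem_insert_self _ _
  · rw [starOne_eq_insert h]; exact Finset.mem_insert_self _ _

lemma card_starOne_replace (h : ∃ y ∈ S, y ≤ a) : (starOne S a).card = S.card := by
  rw [starOne_eq_replace h, Finset.card_insert_of_notMem (not_mem_erase_repl h),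
    Finset.card_erase_of_mem (repl_mem h)]
  have : 1 ≤ S.card := Finset.card_pos.mpr ⟨_, repl_mem h⟩
  omega

lemma cnt_starOne_high (h : ∃ y ∈ S, y ≤ a) {b : ℕ} (hab : a ≤ b) :
    cnt (starOne S a) b = cnt S b := by
  have hrmem : repl S a ∈ S.filter (fun x => x ≤ b) :=
    Finset.mem_filter.mpr ⟨repl_mem h, (repl_le h).trans hab⟩
  have hpos : 1 ≤ cnt S b := Finset.card_pos.mpr ⟨_, hrmem⟩
  have hnm : a ∉ (S.filter (fun x => x ≤ b)).erase (repl S a) := by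
    intro ha
    apply not_mem_erase_repl h
    exact Finset.mem_erase.mpr ⟨(Finset.mem_erase.mp ha).1,
      Finset.mem_of_mem_filter _ (Finset.mem_erase.mp ha).2⟩
  rw [starOne_eq_replace h]
  unfold cnt
  rw [Finset.filter_insert, if_pos hab, Finset.filter_erase,
    Finset.card_insert_of_notMem hnm, Finset.card_erase_of_mem hrmem]
  unfold cnt at hpos
  omega

lemma cnt_starOne_keep {b : ℕ} (h : ∃ y ∈ S, y ≤ a) (hb : b < a) (hrb : b < repl S a) :
    cnt (starOne S a) b = cnt S b := by
  rw [starOne_eq_replace h]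
  unfold cnt
  rw [Finset.filter_insert, if_neg (by omega), Finset.filter_erase,
    Finset.erase_eq_of_notMem]
  intro hmem
  have := (Finset.mem_filter.mp hmem).2
  omega

lemma cnt_starOne_drop {b : ℕ} (h : ∃ y ∈ S, y ≤ a) (hb : b < a)
    (hall : ∀ y ∈ S, y ≤ a → y ≤ b) :
    cnt (starOne S a) b = cnt S b - 1 ∧ cnt S a ≤ cnt S b := by
  have hrb : repl S a ≤ b := hall _ (repl_mem h) (repl_le h)
  have hrmem : repl S a ∈ S.filter (fun x => x ≤ b) := Finset.mem_filter.mpr ⟨repl_mem h, hrb⟩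
  constructor
  · rw [starOne_eq_replace h]
    unfold cnt
    rw [Finset.filter_insert, if_neg (by omega), Finset.filter_erase,
      Finset.card_erase_of_mem hrmem]
  · apply Finset.card_le_card
    intro x hx
    simp only [Finset.mem_filter] at hx ⊢
    exact ⟨hx.1, hall _ hx.1 hx.2⟩

end replace
section mono

lemma starOne_subset_s3 {A B : Finset ℕ} (h : A ⊆ B) (a : ℕ) : starOne A a ⊆ starOne B a := by
  by_cases hA : ∃ y ∈ A, y ≤ a
  · have hB : ∃ y ∈ B, y ≤ a := by
      obtain ⟨y, hy, hya⟩ := hA; exact ⟨y, h hy, hya⟩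
    rw [starOne_eq_replace hA, starOne_eq_replace hB]
    intro x hx
    rcases Finset.mem_insert.mp hx with rfl | hx
    · exact Finset.mem_insert_self _ _
    · have hxA : x ∈ A := Finset.mem_of_mem_erase hx
      have hxne : x ≠ repl A a := Finset.ne_of_mem_erase hx
      apply Finset.mem_insert_of_mem
      apply Finset.mem_erase.mpr
      refine ⟨?_, h hxA⟩
      intro hxr
      -- x = repl B a; then repl B a ∈ A and ≤ a so repl B a ≤ repl A a ≤ repl B a
      have h1 : repl B a ≤ a := repl_le hB
      have h2 : x ≤ repl A a := le_repl hA hxA (hxr ▸ h1)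
      have h3 : repl A a ≤ repl B a := le_repl hB (h (repl_mem hA)) (repl_le hA)
      omega
  · by_cases hB : ∃ y ∈ B, y ≤ a
    · rw [starOne_eq_insert hA, starOne_eq_replace hB]
      intro x hx
      rcases Finset.mem_insert.mp hx with rfl | hx
      · exact Finset.mem_insert_self _ _
      · apply Finset.mem_insert_of_mem
        apply Finset.mem_erase.mpr
        refine ⟨?_, h hx⟩
        intro hxr
        exact hA ⟨x, hx, hxr ▸ repl_le hB⟩
    · rw [starOne_eq_insert hA, starOne_eq_insert hB]
      exact Finset.insert_subset_insert _ h

lemma starWord_subset {A B : Finset ℕ} (h : A ⊆ B) (w : List ℕ) :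
    starWord A w ⊆ starWord B w := by
  induction w generalizing A B with
  | nil => exact h
  | cons a w ih => exact ih (starOne_subset_s3 h a)

end mono

section run
/-- processing a weakly increasing word starting with a replacement keeps the card. -/
lemma runCard : ∀ (w : List ℕ) (S : Finset ℕ) (a : ℕ),
    List.Chain' (· ≤ ·) (a :: w) → (∃ y ∈ S, y ≤ a) →
    (starWord S (a :: w)).card = S.card := by
  intro w
  induction w with
  | nil =>
    intro S a _ h
    rw [starWord_cons, starWord_nil]
    exact card_starOne_replace h
  | cons c w ih =>
    intro S a hch h
    rw [starWord_cons]
    have h1 : (starWord (starOne S a) (c :: w)).card = (starOne S a).card :=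
      ih (starOne S a) c hch.tail ⟨a, mem_starOne_self S a, hch.rel_head⟩
    rw [h1, card_starOne_replace h]

lemma runHigh : ∀ (w : List ℕ) (S : Finset ℕ) (a b : ℕ),
    List.Chain' (· ≤ ·) (a :: w) → (∃ y ∈ S, y ≤ a) → (∀ c ∈ a :: w, c ≤ b) →
    cnt (starWord S (a :: w)) b = cnt S b := by
  intro w
  induction w with
  | nil =>
    intro S a b _ h hb
    rw [starWord_cons, starWord_nil]
    exact cnt_starOne_high h (hb a (by simp))
  | cons c w ih =>
    intro S a b hch h hb
    rw [starWord_cons]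
    rw [ih (starOne S a) c b hch.tail ⟨a, mem_starOne_self S a, hch.rel_head⟩
      (fun x hx => hb x (List.mem_cons_of_mem _ hx))]
    exact cnt_starOne_high h (hb a (by simp))

lemma runLow3 : ∀ (w : List ℕ) (S : Finset ℕ) (a b : ℕ),
    List.Chain' (· ≤ ·) (a :: w) → b < a → (∃ y ∈ S, b < y ∧ y ≤ a) →
    cnt (starWord S (a :: w)) b = cnt S b := by
  intro w
  induction w with
  | nil =>
    intro S a b _ hba ⟨y, hy, hby, hya⟩
    rw [starWord_cons, starWord_nil]
    exact cnt_starOne_keep ⟨y, hy, hya⟩ hba (lt_of_lt_of_le hby (le_repl ⟨y, hy, hya⟩ hy hya))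
  | cons c w ih =>
    intro S a b hch hba ⟨y, hy, hby, hya⟩
    rw [starWord_cons]
    rw [ih (starOne S a) c b hch.tail (lt_of_lt_of_le hba hch.rel_head)
      ⟨a, mem_starOne_self S a, hba, hch.rel_head⟩]
    exact cnt_starOne_keep ⟨y, hy, hya⟩ hba (lt_of_lt_of_le hby (le_repl ⟨y, hy, hya⟩ hy hya))

lemma runLow : ∀ (w : List ℕ) (S : Finset ℕ) (a b : ℕ),
    List.Chain' (· ≤ ·) (a :: w) → (∃ y ∈ S, y ≤ a) → b < a →
    min (cnt S b) (cnt S a - 1) ≤ cnt (starWord S (a :: w)) b := by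
  intro w S a b hch h hba
  by_cases h3 : ∃ y ∈ S, b < y ∧ y ≤ a
  · rw [runLow3 w S a b hch hba h3]
    exact min_le_left _ _
  · push_neg at h3
    have hall : ∀ y ∈ S, y ≤ a → y ≤ b := by
      intro y hy hya
      by_contra hc
      have := h3 y hy (by omega)
      omega
    obtain ⟨hdrop, hle⟩ := cnt_starOne_drop h hba hall
    have hfin : cnt (starWord S (a :: w)) b = cnt (starOne S a) b := by
      cases w with
      | nil => rw [starWord_cons, starWord_nil]
      | cons c w' =>
        rw [starWord_cons]
        exact runLow3 (w') (starOne S a) c b hch.tail (lt_of_lt_of_le hba hch.rel_head)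
          ⟨a, mem_starOne_self S a, hba, hch.rel_head⟩
    rw [hfin, hdrop]
    omega

/-- inserting into a set whose elements are all larger: whole word ends with last. -/
lemma runGo : ∀ (w : List ℕ) (a : ℕ) (S : Finset ℕ),
    (∀ y ∈ S, ∀ c ∈ a :: w, c < y) → List.Chain' (· < ·) (a :: w) →
    starWord (insert a S) w = insert ((a :: w).getLast (by simp)) S := by
  intro w
  induction w with
  | nil => intro a S _ _; simp [starWord_nil]
  | cons c w ih =>
    intro a S hS hch
    have hac : a < c := hch.rel_head
    have hrepl : ∃ y ∈ insert a S, y ≤ c := ⟨a, Finset.mem_insert_self _ _, le_of_lt hac⟩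
    have hreplval : repl (insert a S) c = a := by
      have h1 : repl (insert a S) c ∈ insert a S := repl_mem hrepl
      have h2 : repl (insert a S) c ≤ c := repl_le hrepl
      rcases Finset.mem_insert.mp h1 with h1 | h1
      · exact h1
      · exact absurd h2 (by have := hS _ h1 c (by simp); omega)
    have hstep : starOne (insert a S) c = insert c S := by
      rw [starOne_eq_replace hrepl, hreplval, Finset.erase_insert]
      intro ha
      exact absurd (hS a ha a (by simp)) (lt_irrefl a)
    rw [starWord_cons, hstep]
    have hlast : ((a :: c :: w).getLast (by simp)) = ((c :: w).getLast (by simp)) := by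
      simp [List.getLast]
    rw [hlast]
    exact ih c S (fun y hy d hd => hS y hy d (List.mem_cons_of_mem _ hd)) hch.tail

lemma runInsert (w : List ℕ) (a : ℕ) (S : Finset ℕ)
    (hS : ∀ y ∈ S, ∀ c ∈ a :: w, c < y) (hch : List.Chain' (· < ·) (a :: w)) :
    starWord S (a :: w) = insert ((a :: w).getLast (by simp)) S := by
  have h0 : ¬ ∃ y ∈ S, y ≤ a := by
    intro ⟨y, hy, hya⟩
    exact absurd (hS y hy a (by simp)) (by omega)
  rw [starWord_cons, starOne_eq_insert h0]
  exact runGo w a S hS hch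

end run
section cellword

lemma cellWord_sorted (C : Finset ℕ) : List.Pairwise (· ≤ ·) (cellWord C) :=
  Finset.pairwise_sort _ _

lemma cellWord_chain_le (C : Finset ℕ) : List.Chain' (· ≤ ·) (cellWord C) :=
  (cellWord_sorted C).isChain

lemma cellWord_chain_lt (C : Finset ℕ) : List.Chain' (· < ·) (cellWord C) :=
  (Finset.sortedLT_sort C).isChain

lemma mem_cellWord {C : Finset ℕ} {x : ℕ} : x ∈ cellWord C ↔ x ∈ C := Finset.mem_sort _

lemma cellWord_ne_nil {C : Finset ℕ} (h : C.Nonempty) : cellWord C ≠ [] := by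
  intro hn
  obtain ⟨x, hx⟩ := h
  exact absurd (mem_cellWord.mpr hx) (by rw [hn]; simp)

lemma sorted_le_getLast {l : List ℕ} (hl : List.Pairwise (· ≤ ·) l) (hne : l ≠ [])
    {x : ℕ} (hx : x ∈ l) : x ≤ l.getLast hne := by
  obtain ⟨i, hi, rfl⟩ := List.getElem_of_mem hx
  rw [List.getLast_eq_getElem]
  rcases Nat.lt_or_ge i (l.length - 1) with h | h
  · exact List.pairwise_iff_getElem.mp hl i (l.length - 1) hi (by omega) h
  · have : i = l.length - 1 := by omega
    subst this; rfl

lemma cellWord_facts {C : Finset ℕ} {a : ℕ} {w : List ℕ} (h : cellWord C = a :: w) :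
    a ∈ C ∧ (∀ x ∈ C, a ≤ x) ∧
    ((a :: w).getLast (by simp) ∈ C ∧ ∀ x ∈ C, x ≤ (a :: w).getLast (by simp)) := by
  have hs : List.Pairwise (· ≤ ·) (a :: w) := h ▸ cellWord_sorted C
  refine ⟨mem_cellWord.mp (by rw [h]; simp), ?_, ?_, ?_⟩
  · intro x hx
    have : x ∈ a :: w := h ▸ mem_cellWord.mpr hx
    rcases List.mem_cons.mp this with rfl | hxw
    · exact le_rfl
    · exact List.rel_of_pairwise_cons hs hxw
  · apply mem_cellWord.mp
    rw [h]
    exact List.getLast_mem _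
  · intro x hx
    exact sorted_le_getLast hs (by simp) (h ▸ mem_cellWord.mpr hx)

end cellword

section column

def allLt (A B : Finset ℕ) : Prop := ∀ x ∈ A, ∀ y ∈ B, x < y

def colWord (c : List (Finset ℕ)) : List ℕ := (c.reverse.map cellWord).flatten

lemma colWord_nil : colWord [] = [] := rfl

lemma colWord_cons (C : Finset ℕ) (cs : List (Finset ℕ)) :
    colWord (C :: cs) = colWord cs ++ cellWord C := by
  simp [colWord]

lemma chain_allLt : ∀ (cs : List (Finset ℕ)) (C : Finset ℕ),
    List.Chain' allLt (C :: cs) → (∀ D ∈ C :: cs, D.Nonempty) →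
    ∀ D ∈ cs, allLt C D := by
  intro cs
  induction cs with
  | nil => intro C _ _ D hD; simp at hD
  | cons E cs ih =>
    intro C hch hne D hD
    rcases List.mem_cons.mp hD with rfl | hD
    · exact hch.rel_head
    · intro x hx y hy
      obtain ⟨z, hz⟩ := hne E (by simp)
      have h1 : x < z := hch.rel_head x hx z hz
      have h2 : z < y := ih E hch.tail (fun D' hD' => hne D' (List.mem_cons_of_mem _ hD')) D hD z hz y hy
      omega

lemma colLemma : ∀ (c : List (Finset ℕ)) (d : ℕ) (S : Finset ℕ),
    (∀ C ∈ c, C.Nonempty) → List.Chain' allLt c →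
    (∀ r, r < c.length → ∀ x ∈ c.getD r ∅, r + 1 + d ≤ cnt S x) →
    ((starWord S (colWord c)).card = S.card) ∧
    (∀ r, r < c.length → ∃ x ∈ c.getD r ∅, r + 1 + d ≤ cnt (starWord S (colWord c)) x) ∧
    (∀ b, (∀ C ∈ c, ∀ a ∈ C, b < a) → min (cnt S b) d ≤ cnt (starWord S (colWord c)) b) := by
  intro c
  induction c with
  | nil =>
    intro d S _ _ _
    rw [colWord_nil, starWord_nil]
    exact ⟨rfl, by intro r hr; simp at hr, fun b _ => min_le_left _ _⟩
  | cons C cs ih =>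
    intro d S hne hch hpre
    have hCne : C.Nonempty := hne C (by simp)
    obtain ⟨hcard', hpost', hlow'⟩ := ih (d + 1) S
      (fun D hD => hne D (List.mem_cons_of_mem _ hD)) hch.tail
      (by
        intro r hr x hx
        have := hpre (r + 1) (by simpa using Nat.succ_lt_succ hr) x (by simpa using hx)
        omega)
    set S' := starWord S (colWord cs) with hS'
    cases hcw : cellWord C with
    | nil => exact absurd hcw (cellWord_ne_nil hCne)
    | cons a w =>
    obtain ⟨haC, hamin, hmC, hmmax⟩ := cellWord_facts hcw
    set m := ((a :: w).getLast (by simp)) with hm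
    have hchw : List.Chain' (· ≤ ·) (a :: w) := hcw ▸ cellWord_chain_le C
    have hallLtcs : ∀ D ∈ cs, allLt C D := chain_allLt cs C hch (by
      intro D hD
      rcases List.mem_cons.mp hD with rfl | hD
      · exact hCne
      · exact hne D (List.mem_cons_of_mem _ hD))
    have haSa : d + 1 ≤ cnt S a := by
      have := hpre 0 (by simp) a (by simpa using haC)
      omega
    have hS'a : d + 1 ≤ cnt S' a := by
      have := hlow' a (by
        intro D hD y hy
        exact hallLtcs D hD a haC y hy)
      omega
    have hy : ∃ y ∈ S', y ≤ a := exists_of_cnt_pos (by omega)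
    have hdecomp : starWord S (colWord (C :: cs)) = starWord S' (a :: w) := by
      rw [colWord_cons, starWord_append, hcw]
    refine ⟨?_, ?_, ?_⟩
    · rw [hdecomp, runCard w S' a hchw hy, hcard']
    · intro r hr
      match r with
      | 0 =>
        refine ⟨m, by simpa using hmC, ?_⟩
        rw [hdecomp, runHigh w S' a m hchw hy (by
          intro x hx
          exact hmmax x (mem_cellWord.mp (hcw ▸ hx)))]
        calc 0 + 1 + d = d + 1 := by omega
        _ ≤ cnt S' a := hS'a
        _ ≤ cnt S' m := cnt_mono_le S' (hamin m hmC)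
      | r' + 1 =>
        obtain ⟨x, hx, hcx⟩ := hpost' r' (by simpa using hr)
        refine ⟨x, by simpa using hx, ?_⟩
        have hxcs : x ∈ cs.getD r' ∅ := hx
        have hr' : r' < cs.length := by simpa using hr
        have hxD : x ∈ cs[r']'hr' := by
          rwa [List.getD_eq_getElem cs ∅ hr'] at hxcs
        rw [hdecomp, runHigh w S' a x hchw hy (by
          intro e he
          have heC : e ∈ C := mem_cellWord.mp (hcw ▸ he)
          exact le_of_lt (hallLtcs _ (List.getElem_mem hr') e heC x hxD))]
        omega
    · intro b hb
      have hba : b < a := hb C (by simp) a haC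
      have h1 : min (cnt S' b) (cnt S' a - 1) ≤ cnt (starWord S (colWord (C :: cs))) b := by
        rw [hdecomp]
        exact runLow w S' a b hchw hy hba
      have h2 : min (cnt S b) (d + 1) ≤ cnt S' b := hlow' b (by
        intro D hD y hy'
        exact hb D (List.mem_cons_of_mem _ hD) y hy')
      omega

lemma firstCol : ∀ (c : List (Finset ℕ)),
    (∀ C ∈ c, C.Nonempty) → List.Chain' allLt c →
    ((starWord ∅ (colWord c)).card = c.length) ∧
    (∀ r, r < c.length → ∃ x ∈ c.getD r ∅, r + 1 ≤ cnt (starWord ∅ (colWord c)) x) ∧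
    (∀ y ∈ starWord ∅ (colWord c), ∃ D ∈ c, y ∈ D) := by
  intro c
  induction c with
  | nil =>
    rw [colWord_nil, starWord_nil]
    exact fun _ _ => ⟨rfl, by intro r hr; simp at hr, by simp⟩
  | cons C cs ih =>
    intro hne hch
    have hCne : C.Nonempty := hne C (by simp)
    obtain ⟨hcard', hpost', hmem'⟩ := ih (fun D hD => hne D (List.mem_cons_of_mem _ hD)) hch.tail
    set K' := starWord ∅ (colWord cs) with hK'
    cases hcw : cellWord C with
    | nil => exact absurd hcw (cellWord_ne_nil hCne)
    | cons a w =>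
    obtain ⟨haC, hamin, hmC, hmmax⟩ := cellWord_facts hcw
    set m := ((a :: w).getLast (by simp)) with hm
    have hallLtcs : ∀ D ∈ cs, allLt C D := chain_allLt cs C hch (by
      intro D hD
      rcases List.mem_cons.mp hD with rfl | hD
      · exact hCne
      · exact hne D (List.mem_cons_of_mem _ hD))
    have hbig : ∀ y ∈ K', ∀ e ∈ a :: w, e < y := by
      intro y hy e he
      obtain ⟨D, hD, hyD⟩ := hmem' y hy
      exact hallLtcs D hD e (mem_cellWord.mp (hcw ▸ he)) y hyD
    have hdecomp : starWord ∅ (colWord (C :: cs)) = insert m K' := by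
      rw [colWord_cons, starWord_append, hcw, ← hK']
      exact runInsert w a K' hbig (hcw ▸ cellWord_chain_lt C)
    have hmK' : m ∉ K' := by
      intro hmem
      exact absurd (hbig m hmem m (List.getLast_mem _)) (lt_irrefl m)
    refine ⟨?_, ?_, ?_⟩
    · rw [hdecomp, Finset.card_insert_of_notMem hmK', hcard']
      simp
    · intro r hr
      match r with
      | 0 =>
        refine ⟨m, by simpa using hmC, ?_⟩
        rw [hdecomp]
        exact mem_cnt (Finset.mem_insert_self _ _) le_rfl
      | r' + 1 =>
        obtain ⟨x, hx, hcx⟩ := hpost' r' (by simpa using hr)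
        refine ⟨x, by simpa using hx, ?_⟩
        have hr' : r' < cs.length := by simpa using hr
        have hxD : x ∈ cs[r']'hr' := by
          rwa [List.getD_eq_getElem cs ∅ hr'] at hx
        have hmx : m ≤ x := le_of_lt (hallLtcs _ (List.getElem_mem hr') m hmC x hxD)
        rw [hdecomp]
        have : cnt (insert m K') x = cnt K' x + 1 := by
          unfold cnt
          rw [Finset.filter_insert, if_pos hmx, Finset.card_insert_of_notMem (by
            intro hc
            exact hmK' (Finset.mem_of_mem_filter _ hc))]
        omega
    · intro y hy
      rw [hdecomp] at hy
      rcases Finset.mem_insert.mp hy with rfl | hy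
      · exact ⟨C, by simp, hmC⟩
      · obtain ⟨D, hD, hyD⟩ := hmem' y hy
        exact ⟨D, List.mem_cons_of_mem _ hD, hyD⟩

end column
section rest

def colRel (c d : List (Finset ℕ)) : Prop :=
  d.length ≤ c.length ∧ ∀ r < d.length, ∀ x ∈ c.getD r ∅, ∀ y ∈ d.getD r ∅, x ≤ y

lemma svtWord_nil : svtWord [] = [] := rfl

lemma svtWord_cons (c : List (Finset ℕ)) (cs : List (List (Finset ℕ))) :
    svtWord (c :: cs) = colWord c ++ svtWord cs := rfl

lemma restLemma : ∀ (cols : List (List (Finset ℕ))) (p : List (Finset ℕ)) (S : Finset ℕ),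
    (∀ col ∈ cols, ∀ C ∈ col, C.Nonempty) →
    (∀ col ∈ cols, List.Chain' allLt col) →
    List.Chain' colRel (p :: cols) →
    (∀ r, r < p.length → ∃ x ∈ p.getD r ∅, r + 1 ≤ cnt S x) →
    (starWord S (svtWord cols)).card = S.card := by
  intro cols
  induction cols with
  | nil => intro p S _ _ _ _; rw [svtWord_nil, starWord_nil]
  | cons c cs ih =>
    intro p S hne hcols hch hpost
    have hrel : colRel p c := hch.rel_head
    have hpre : ∀ r, r < c.length → ∀ y ∈ c.getD r ∅, r + 1 + 0 ≤ cnt S y := by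
      intro r hr y hy
      obtain ⟨x, hx, hcx⟩ := hpost r (lt_of_lt_of_le hr hrel.1)
      have h1 := hrel.2 r hr x hx y hy
      have h2 := cnt_mono_le S h1
      omega
    obtain ⟨hcard, hpost', -⟩ := colLemma c 0 S (hne c (by simp)) (hcols c (by simp)) hpre
    rw [svtWord_cons, starWord_append]
    rw [ih c (starWord S (colWord c))
      (fun col hcol => hne col (List.mem_cons_of_mem _ hcol))
      (fun col hcol => hcols col (List.mem_cons_of_mem _ hcol))
      hch.tail
      (by
        intro r hr
        obtain ⟨x, hx, hcx⟩ := hpost' r hr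
        exact ⟨x, hx, by omega⟩)]
    exact hcard

end rest

section choice

def dmin (S : Finset ℕ) : ℕ := if h : S.Nonempty then S.min' h else 0

lemma dmin_mem {S : Finset ℕ} (h : S.Nonempty) : dmin S ∈ S := by
  rw [dmin, dif_pos h]; exact S.min'_mem h

def cellD (T : List (List (Finset ℕ))) (c i : ℕ) : Finset ℕ := (T.getD c []).getD i ∅

lemma cellD_eq {T : List (List (Finset ℕ))} {c i : ℕ} (hc : c < T.length)
    (hi : i < (T[c]).length) : cellD T c i = (T[c])[i] := by
  rw [cellD, List.getD_eq_getElem T [] hc, List.getD_eq_getElem _ ∅ hi]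

lemma hcells {T : List (List (Finset ℕ))} (hT : IsSVT T) {c i : ℕ} (hc : c < T.length)
    (hi : i < (T[c]).length) : (cellD T c i).Nonempty := by
  rw [cellD_eq hc hi]
  exact hT.1 _ (List.getElem_mem hc) _ (List.getElem_mem hi)

lemma isChoice_of_fun (T : List (List (Finset ℕ))) (g : ℕ → ℕ → ℕ)
    (h : ∀ ci (hc : ci < T.length) ri (hr : ri < (T[ci]).length), g ci ri ∈ (T[ci])[ri]) :
    IsChoice ((List.range T.length).map fun ci =>
      (List.range (T.getD ci []).length).map fun ri => g ci ri) T := by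
  rw [IsChoice, List.forall₂_iff_get]
  refine ⟨by simp, ?_⟩
  intro i h1 h2
  simp only [List.get_eq_getElem, List.getElem_map, List.getElem_range]
  have h2' : i < T.length := by simpa using h2
  rw [List.forall₂_iff_get]
  refine ⟨by simp only [List.length_map, List.length_range, List.getD_eq_getElem T [] h2'], ?_⟩
  intro j hj1 hj2
  simp only [List.get_eq_getElem, List.getElem_map, List.getElem_range]
  exact h i h2' j hj2

/-- min choice with up to two overridden cells -/
def ovr (T : List (List (Finset ℕ))) (c₁ i₁ v₁ c₂ i₂ v₂ : ℕ) : ℕ → ℕ → ℕ :=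
  fun c i => if c = c₁ ∧ i = i₁ then v₁ else if c = c₂ ∧ i = i₂ then v₂ else dmin (cellD T c i)

lemma ovr_mem {T : List (List (Finset ℕ))} (hT : IsSVT T) {c₁ i₁ v₁ c₂ i₂ v₂ : ℕ}
    (h₁ : v₁ ∈ cellD T c₁ i₁) (h₂ : v₂ ∈ cellD T c₂ i₂) :
    ∀ c (hc : c < T.length) i (hi : i < (T[c]).length),
      ovr T c₁ i₁ v₁ c₂ i₂ v₂ c i ∈ (T[c])[i] := by
  intro c hc i hi
  rw [ovr]
  split_ifs with ha hb
  · obtain ⟨rfl, rfl⟩ := ha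
    rwa [← cellD_eq hc hi]
  · obtain ⟨rfl, rfl⟩ := hb
    rwa [← cellD_eq hc hi]
  · rw [← cellD_eq hc hi]
    exact dmin_mem (hcells hT hc hi)

lemma ovr_fst (T : List (List (Finset ℕ))) (c₁ i₁ v₁ c₂ i₂ v₂ : ℕ) :
    ovr T c₁ i₁ v₁ c₂ i₂ v₂ c₁ i₁ = v₁ := by
  simp [ovr]

lemma ovr_snd (T : List (List (Finset ℕ))) {c₁ i₁ c₂ i₂ : ℕ} (v₁ v₂ : ℕ)
    (h : ¬ (c₂ = c₁ ∧ i₂ = i₁)) :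
    ovr T c₁ i₁ v₁ c₂ i₂ v₂ c₂ i₂ = v₂ := by
  simp [ovr, if_neg h]

lemma cond2idx {T : List (List (Finset ℕ))} (hT : IsSVT T) {ci r : ℕ} (hc : ci < T.length)
    (hr : r + 1 < (T.getD ci []).length) :
    ∀ x ∈ cellD T ci r, ∀ y ∈ cellD T ci (r + 1), x < y := by
  intro x hx y hy
  have hlen : (T.getD ci []).length = (T[ci]).length := by
    rw [List.getD_eq_getElem T [] hc]
  have hg := ovr_mem hT hx hy
  have hfill := hT.2 _ (isChoice_of_fun T (ovr T ci r x ci (r+1) y) hg)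
  have hmm : ((List.range (T.getD ci []).length).map fun ri => ovr T ci r x ci (r+1) y ci ri) ∈
      (List.range T.length).map (fun c => (List.range (T.getD c []).length).map
        fun ri => ovr T ci r x ci (r+1) y c ri) :=
    List.mem_map.mpr ⟨ci, List.mem_range.mpr hc, rfl⟩
  have hchain := hfill.1 _ hmm
  rw [List.Chain', List.isChain_iff_getElem] at hchain
  have hrr := hchain r (by simp only [List.length_map, List.length_range]; omega)
  simp only [List.get_eq_getElem, List.getElem_map, List.getElem_range] at hrr
  rwa [ovr_fst, ovr_snd T x y (by omega)] at hrr

lemma gmin_mem {T : List (List (Finset ℕ))} (hT : IsSVT T) :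
    ∀ c (hc : c < T.length) i (hi : i < (T[c]).length), dmin (cellD T c i) ∈ (T[c])[i] := by
  intro c hc i hi
  rw [← cellD_eq hc hi]
  exact dmin_mem (hcells hT hc hi)

lemma cond3len {T : List (List (Finset ℕ))} (hT : IsSVT T) {ci : ℕ} (hc : ci + 1 < T.length) :
    (T.getD (ci + 1) []).length ≤ (T.getD ci []).length := by
  have hfill := hT.2 _ (isChoice_of_fun T (fun c i => dmin (cellD T c i)) (gmin_mem hT))
  have hchain := hfill.2
  rw [List.Chain', List.isChain_iff_getElem] at hchain
  have h := hchain ci (by simp only [List.length_map, List.length_range]; omega)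
  simp only [List.get_eq_getElem, List.getElem_map, List.getElem_range] at h
  simpa only [List.length_map, List.length_range] using h.1

lemma cond3le {T : List (List (Finset ℕ))} (hT : IsSVT T) {ci r : ℕ} (hc : ci + 1 < T.length)
    (hr : r < (T.getD (ci + 1) []).length) :
    ∀ x ∈ cellD T ci r, ∀ y ∈ cellD T (ci + 1) r, x ≤ y := by
  intro x hx y hy
  have hg := ovr_mem hT (c₂ := ci + 1) hx hy
  have hfill := hT.2 _ (isChoice_of_fun T (ovr T ci r x (ci + 1) r y) hg)
  have hchain := hfill.2
  rw [List.Chain', List.isChain_iff_getElem] at hchain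
  have h := hchain ci (by simp only [List.length_map, List.length_range]; omega)
  simp only [List.get_eq_getElem, List.getElem_map, List.getElem_range] at h
  have hrc : r < (T.getD ci []).length := lt_of_lt_of_le hr (cond3len hT hc)
  have h2 := h.2 r (by simpa only [List.length_map, List.length_range] using hr)
  rw [List.getD_eq_getElem _ 0 (by simpa only [List.length_map, List.length_range] using hrc), List.getD_eq_getElem _ 0 (by simpa only [List.length_map, List.length_range] using hr)] at h2
  simp only [List.getElem_map, List.getElem_range] at h2
  rwa [ovr_fst, ovr_snd T x y (by omega)] at h2

end choice
section assemble

lemma colsStrict {T : List (List (Finset ℕ))} (hT : IsSVT T) :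
    ∀ col ∈ T, List.Chain' allLt col := by
  intro col hcol
  obtain ⟨ci, hci, rfl⟩ := List.getElem_of_mem hcol
  rw [List.Chain', List.isChain_iff_getElem]
  intro r hr
  intro x hx y hy
  have hlen : (T.getD ci []).length = (T[ci]).length := by
    rw [List.getD_eq_getElem T [] hci]
  refine cond2idx (r := r) hT hci (by omega) x ?_ y ?_
  · rw [cellD_eq hci (by omega)]
    simpa using hx
  · rw [cellD_eq hci (by omega)]
    simpa using hy

lemma chainColRel {T : List (List (Finset ℕ))} (hT : IsSVT T) : List.Chain' colRel T := by
  rw [List.Chain', List.isChain_iff_getElem]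
  intro i hi
  have hi1 : i + 1 < T.length := by omega
  have e1 : T[i] = T.getD i [] := by
    rw [List.getD_eq_getElem T [] (by omega)]
  have e2 : T[i + 1] = T.getD (i + 1) [] := by
    rw [List.getD_eq_getElem T [] hi1]
  constructor
  · rw [e1, e2]
    exact cond3len hT hi1
  · intro r hr x hx y hy
    rw [e2] at hr hy
    rw [e1] at hx
    exact cond3le hT hi1 hr x hx y hy

lemma chain'_drop {α : Type*} {R : α → α → Prop} (l : List α) (n : ℕ)
    (h : List.Chain' R l) : List.Chain' R (l.drop n) := by
  induction n with
  | zero => simpa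
  | succ n ih =>
    rw [← List.tail_drop]
    exact ih.tail

lemma cnt_sort_le {A : Finset ℕ} {k b : ℕ} (hk : k < A.card) :
    ((A.sort (· ≤ ·)).getD k 0 ≤ b ↔ k + 1 ≤ cnt A b) := by
  obtain ⟨l, hl⟩ : ∃ l, l = A.sort (· ≤ ·) := ⟨_, rfl⟩
  have hmem : ∀ x, x ∈ l ↔ x ∈ A := by
    intro x; rw [hl]; exact Finset.mem_sort _
  have hlen : l.length = A.card := by rw [hl]; exact Finset.length_sort _
  have hsorted : List.Pairwise (· ≤ ·) l := by rw [hl]; exact Finset.pairwise_sort _ _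
  have hnodup : l.Nodup := by rw [hl]; exact Finset.sort_nodup _ _
  have hkl : k < l.length := by omega
  rw [← hl, List.getD_eq_getElem l 0 hkl]
  constructor
  · intro hle
    have hsub : (l.take (k + 1)).toFinset ⊆ A.filter (fun x => x ≤ b) := by
      intro x hx
      rw [List.mem_toFinset] at hx
      obtain ⟨i, hi, rfl⟩ := List.getElem_of_mem hx
      rw [List.getElem_take]
      have hik : i ≤ k := by
        have := hi; rw [List.length_take] at this; omega
      have h1 : l[i]'(by omega) ≤ l[k]'hkl := by
        rcases Nat.lt_or_ge i k with h | h
        · exact List.pairwise_iff_getElem.mp hsorted i k (by omega) hkl h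
        · have : i = k := by omega
          subst this; rfl
      refine Finset.mem_filter.mpr ⟨(hmem _).mp (List.getElem_mem _), by omega⟩
    have hcard1 : (l.take (k + 1)).toFinset.card = k + 1 := by
      rw [List.toFinset_card_of_nodup ((List.take_sublist _ _).nodup hnodup), List.length_take]
      omega
    calc k + 1 = (l.take (k + 1)).toFinset.card := hcard1.symm
    _ ≤ _ := Finset.card_le_card hsub
  · intro hcnt
    by_contra hgt
    push_neg at hgt
    have hsub : A.filter (fun x => x ≤ b) ⊆ (l.take k).toFinset := by
      intro x hx
      obtain ⟨hxA, hxb⟩ := Finset.mem_filter.mp hx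
      obtain ⟨i, hi, rfl⟩ := List.getElem_of_mem ((hmem _).mpr hxA)
      have hik : i < k := by
        by_contra hik
        rcases Nat.lt_or_ge k i with h | h
        · have : l[k]'hkl ≤ l[i]'hi := List.pairwise_iff_getElem.mp hsorted k i hkl hi h
          omega
        · have : i = k := by omega
          subst this; omega
      rw [List.mem_toFinset]
      exact List.mem_iff_getElem.mpr ⟨i, by rw [List.length_take]; omega, by rw [List.getElem_take]⟩
    have hc1 := Finset.card_le_card hsub
    have h2 : (l.take k).toFinset.card ≤ k :=
      le_trans (List.toFinset_card_le _) (by rw [List.length_take]; omega)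
    unfold cnt at hcnt
    omega

lemma sort_getD_subset {A B : Finset ℕ} (h : B ⊆ A) {k : ℕ} (hk : k < B.card) :
    (A.sort (· ≤ ·)).getD k 0 ≤ (B.sort (· ≤ ·)).getD k 0 := by
  have hkA : k < A.card := lt_of_lt_of_le hk (Finset.card_le_card h)
  rw [cnt_sort_le hkA]
  have h1 : k + 1 ≤ cnt B ((B.sort (· ≤ ·)).getD k 0) := (cnt_sort_le hk).mp le_rfl
  exact h1.trans (cnt_mono_set h _)

theorem tmax_is_key' (T : List (List (Finset ℕ))) (hT : IsSVT T) :
    (∀ j, (svtKeyCol T j).card = (T.getD j []).length) ∧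
    (∀ j, svtKeyCol T (j+1) ⊆ svtKeyCol T j) ∧
    IsSSYTFill ((List.range T.length).map (fun j => (svtKeyCol T j).sort (· ≤ ·))) := by
  have hkey1 : ∀ j, (svtKeyCol T j).card = (T.getD j []).length := by
    intro j
    by_cases hj : j < T.length
    · have e : svtKeyCol T j =
          starWord (starWord ∅ (colWord (T[j]))) (svtWord (T.drop (j + 1))) := by
        rw [svtKeyCol, List.drop_eq_getElem_cons hj, svtWord_cons, starWord_append]
      have hjm : T[j] ∈ T := List.getElem_mem hj
      obtain ⟨hfc1, hfc2, -⟩ := firstCol (T[j])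
        (fun C hC => hT.1 _ hjm C hC) (colsStrict hT _ hjm)
      have hdropchain : List.Chain' colRel (T[j] :: T.drop (j + 1)) := by
        rw [← List.drop_eq_getElem_cons hj]
        exact chain'_drop T j (chainColRel hT)
      have hrest := restLemma (T.drop (j + 1)) (T[j]) (starWord ∅ (colWord (T[j])))
        (fun col hcol => hT.1 col (List.mem_of_mem_drop hcol))
        (fun col hcol => colsStrict hT col (List.mem_of_mem_drop hcol))
        hdropchain hfc2
      rw [e, hrest, hfc1, List.getD_eq_getElem T [] hj]
    · have h1 : T.drop j = [] := List.drop_eq_nil_of_le (by omega)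
      rw [svtKeyCol, h1, svtWord_nil, starWord_nil, List.getD_eq_default T [] (by omega)]
      simp
  have hkey2 : ∀ j, svtKeyCol T (j + 1) ⊆ svtKeyCol T j := by
    intro j
    by_cases hj : j < T.length
    · rw [svtKeyCol, svtKeyCol, List.drop_eq_getElem_cons hj, svtWord_cons, starWord_append]
      exact starWord_subset (Finset.empty_subset _) _
    · have h1 : T.drop (j + 1) = [] := List.drop_eq_nil_of_le (by omega)
      have h2 : svtKeyCol T (j + 1) = ∅ := by
        rw [svtKeyCol, h1, svtWord_nil, starWord_nil]
      rw [h2]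
      exact Finset.empty_subset _
  refine ⟨hkey1, hkey2, ?_, ?_⟩
  · intro c hc
    obtain ⟨j, hj, rfl⟩ := List.mem_map.mp hc
    exact (Finset.sortedLT_sort _).isChain
  · rw [List.Chain', List.isChain_iff_getElem]
    intro i hi
    have hi1 : i + 1 < T.length := by
      simp only [List.length_map, List.length_range] at hi; omega
    simp only [List.get_eq_getElem, List.getElem_map, List.getElem_range]
    have hsub : svtKeyCol T (i + 1) ⊆ svtKeyCol T i := hkey2 i
    constructor
    · rw [Finset.length_sort, Finset.length_sort, hkey1 i, hkey1 (i + 1)]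
      exact cond3len hT hi1
    · intro r hr
      rw [Finset.length_sort] at hr
      exact sort_getD_subset hsub hr

/-- **Corollary (`T_max` is a key).** For every set-valued tableau `T` of
partition shape, the tableau `T_max` (whose column `j` is `svtKeyCol T j`, the
entrywise maximum of the right keys of the choices of `T`) is a key: it is a
semistandard Young tableau of the same (partition) shape as `T`, and every
entry of column `j+1` also appears in column `j`. -/
theorem tmax_is_key (T : List (List (Finset ℕ))) (hT : IsSVT T) :
    (∀ j, (svtKeyCol T j).card = (T.getD j []).length) ∧
    (∀ j, svtKeyCol T (j+1) ⊆ svtKeyCol T j) ∧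
    IsSSYTFill ((List.range T.length).map (fun j => (svtKeyCol T j).sort (· ≤ ·))) :=
  tmax_is_key' T hT
end assemble
end

section
/- Let B be a seminormal abstract Kashiwara GL_n-crystal and let X_0, …, X_k be an i-string in B. Then π_i(x^{wt(X_0)}) = Σ_{j=0}^{k} x^{wt(X_j)}. -/
/-- Iterates of a partially defined operator (`none`, which encodes `𝟎`,
propagates). -/
def iterO {B : Type*} (g : B → Option B) : ℕ → B → Option B
  | 0, x => some x
  | k+1, x => (g x).bind (iterO g k)

/-- The monomial `x^v` in the group algebra `ℤ[x_1^{±1}, x_2^{±1}, …]`,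
whose exponents are integer vectors. -/
noncomputable def monom (v : ℕ → ℤ) : AddMonoidAlgebra ℤ (ℕ → ℤ) :=
  AddMonoidAlgebra.single v 1

lemma iterO_succ' {B : Type*} (g : B → Option B) (j : ℕ) (x : B) :
    iterO g (j+1) x = (iterO g j x).bind g := by
  induction j generalizing x with
  | zero => simp [iterO]
  | succ j ih =>
    rw [iterO]
    cases h : g x with
    | none => simp [iterO, h]
    | some y => simpa [iterO, h] using ih y

lemma monom_mul (a b : ℕ → ℤ) : monom a * monom b = monom (a + b) := by
  simp [monom, AddMonoidAlgebra.single_mul_single]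

/-- **Lemma (sum over an `i`-string).** Let `B` be a seminormal abstract
Kashiwara `GL_n`-crystal (with operators `e_i, f_i`, string lengths
`ε_i, φ_i`, and weight `wt`, satisfying axioms K1 and K2 and seminormality),
and let `X 0, …, X k` be an `i`-string in `B`.  Then
`π_i (x^{wt(X 0)}) = ∑_{j=0}^{k} x^{wt(X j)}`.  Since
`π_i(f) = (x_i - x_{i+1})⁻¹ (x_i f - s_i (x_i f))`, the conclusion is stated
in the equivalent multiplied-through form
`(x_i - x_{i+1}) ∑_j x^{wt(X j)} = x_i x^{wt(X 0)} - s_i (x_i x^{wt(X 0)})`,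
where `s_i (x_i x^{wt(X 0)}) = x_{i+1} x^{s_i (wt(X 0))}`. -/
theorem iString_sum (n : ℕ) (B : Type*) [Nonempty B]
    (e f : ℕ → B → Option B) (eps phi : ℕ → B → ℤ) (wt : B → ℕ → ℤ)
    (hK1 : ∀ i X Y, i + 1 < n → (e i X = some Y ↔ f i Y = some X))
    (hK1' : ∀ i X Y, i + 1 < n → e i X = some Y →
      eps i Y = eps i X - 1 ∧ phi i Y = phi i X + 1 ∧
      wt Y = fun j => wt X j + (if j = i then 1 else 0) - (if j = i + 1 then 1 else 0))
    (hK2 : ∀ i X, i + 1 < n → phi i X = (wt X i - wt X (i+1)) + eps i X)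
    (hseminormal_e : ∀ i X, i + 1 < n → ∀ k : ℕ,
      (iterO (e i) k X ≠ none ↔ (k : ℤ) ≤ eps i X))
    (hseminormal_f : ∀ i X, i + 1 < n → ∀ k : ℕ,
      (iterO (f i) k X ≠ none ↔ (k : ℤ) ≤ phi i X))
    (i : ℕ) (hi : i + 1 < n) (k : ℕ) (X : ℕ → B)
    (h0 : e i (X 0) = none) (hk : f i (X k) = none)
    (hstep : ∀ j, j < k → f i (X j) = some (X (j+1))) :
    (monom (Pi.single i 1) - monom (Pi.single (i+1) 1)) *
        (∑ j ∈ Finset.range (k+1), monom (wt (X j))) =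
      monom (wt (X 0) + Pi.single i 1) -
        monom (wt (X 0) ∘ (Equiv.swap i (i+1)) + Pi.single (i+1) 1) := by
  -- weight step relation
  have hwt : ∀ j, j < k → ∀ m, wt (X j) m + (if m = i+1 then 1 else 0)
      = wt (X (j+1)) m + (if m = i then 1 else 0) := by
    intro j hj m
    have he : e i (X (j+1)) = some (X j) := (hK1 i (X (j+1)) (X j) hi).mpr (hstep j hj)
    have h := congrFun (hK1' i (X (j+1)) (X j) hi he).2.2 m
    rw [h]; split_ifs <;> omega
  -- eps i (X 0) = 0
  have heps : eps i (X 0) = 0 := by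
    have h1 : iterO (e i) 1 (X 0) = none := by simp [iterO, h0]
    have hge := (hseminormal_e i (X 0) hi 0).mp (by simp [iterO])
    have hlt : ¬ ((1 : ℤ) ≤ eps i (X 0)) := by
      intro h
      exact (hseminormal_e i (X 0) hi 1).mpr (by exact_mod_cast h) h1
    push_cast at hge
    omega
  -- iterates of f along the string
  have hiter : ∀ j, j ≤ k → iterO (f i) j (X 0) = some (X j) := by
    intro j hj
    induction j with
    | zero => rfl
    | succ j ih =>
      rw [iterO_succ', ih (by omega)]
      simp [hstep j (by omega)]
  -- phi i (X 0) = k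
  have hphi : phi i (X 0) = k := by
    have hge := (hseminormal_f i (X 0) hi k).mp (by rw [hiter k le_rfl]; simp)
    have hlt : ¬ (((k+1 : ℕ) : ℤ) ≤ phi i (X 0)) := by
      intro h
      exact (hseminormal_f i (X 0) hi (k+1)).mpr h
        (by rw [iterO_succ', hiter k le_rfl]; simp [hk])
    push_cast at hlt
    omega
  have hkval : (k : ℤ) = wt (X 0) i - wt (X 0) (i+1) := by
    have := hK2 i (X 0) hi
    omega
  -- the interpolation function
  set c : ℕ → ℕ → ℤ := fun j m => wt (X 0) m + (if m = i then 1 else 0)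
      + (j : ℤ) * ((if m = i+1 then 1 else 0) - (if m = i then 1 else 0)) with hc
  have hcj : ∀ j, j ≤ k → c j = fun m => wt (X j) m + (if m = i then 1 else 0) := by
    intro j hj
    induction j with
    | zero => funext m; simp [hc]
    | succ j ih =>
      funext m
      have h1 := congrFun (ih (by omega)) m
      have h2 := hwt j (by omega) m
      simp only [hc] at h1 ⊢
      push_cast
      split_ifs at h1 h2 ⊢ <;> omega
  have hcsucc : ∀ j, j ≤ k →
      c (j+1) = fun m => wt (X j) m + (if m = i+1 then 1 else 0) := by
    intro j hj
    funext m
    have h1 := congrFun (hcj j hj) m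
    simp only [hc] at h1 ⊢
    push_cast
    split_ifs at h1 ⊢ <;> omega
  -- expand and telescope
  have hfin : ∀ v : ℕ → ℤ, (Pi.single i 1 + v : ℕ → ℤ)
      = fun m => v m + (if m = i then 1 else 0) := by
    intro v; funext m; simp [Pi.single_apply]; ring
  have hfin' : ∀ v : ℕ → ℤ, (Pi.single (i+1) 1 + v : ℕ → ℤ)
      = fun m => v m + (if m = i+1 then 1 else 0) := by
    intro v; funext m; simp [Pi.single_apply]; ring
  rw [sub_mul, Finset.mul_sum, Finset.mul_sum, ← Finset.sum_sub_distrib]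
  have hterm : ∀ j ∈ Finset.range (k+1),
      monom (Pi.single i 1) * monom (wt (X j))
        - monom (Pi.single (i+1) 1) * monom (wt (X j))
      = monom (c j) - monom (c (j+1)) := by
    intro j hj
    rw [Finset.mem_range] at hj
    rw [monom_mul, monom_mul, hfin, hfin', hcj j (by omega), hcsucc j (by omega)]
  rw [Finset.sum_congr rfl hterm, Finset.sum_range_sub' (fun j => monom (c j))]
  congr 1
  · congr 1
    funext m
    simp only [hc, Pi.add_apply, Pi.single_apply]
    push_cast
    split_ifs <;> ring
  · congr 1
    funext m
    simp only [hc, Pi.add_apply, Function.comp_apply, Pi.single_apply]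
    rcases eq_or_ne m i with rfl | hmi
    · rw [Equiv.swap_apply_left]
      have : m ≠ m + 1 := by omega
      simp [this]
      omega
    · rcases eq_or_ne m (i+1) with rfl | hmi1
      · rw [Equiv.swap_apply_right]
        simp [hmi]
        omega
      · rw [Equiv.swap_apply_of_ne_of_ne hmi hmi1]
        simp [hmi, hmi1]
end
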